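/- Let F be a field which is a module over a characteristic-0 principal ideal domain R, and let d ≤ n. For all λ ∈ Λ^I_+(n,d), the standard and costandard T^Z(n,d)-supermodules have equal formal characters: ch Δ(λ) = ch ∇(λ), i.e. dim η_μ Δ(λ) = dim η_μ ∇(λ) for every μ ∈ Λ^I(n,d). -/

import Mathlib

open scoped BigOperators
open Finsupp

set_option maxHeartbeats 1000000

namespace Paper

noncomputable section

variable (K : Type) [CommRing K]

/-- Coordinate model for the `d`-th tensor power `V^{⊗ d}` of a free module `V`
with basis indexed by `β`: the basis of `V^{⊗ d}` is indexed by `d`-tuples in `β`. -/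
abbrev TPow (β : Type) (d : ℕ) : Type := (Fin d → β) →₀ K

variable {β : Type} [Fintype β] [DecidableEq β]

/-- The tensor product `v 0 ⊗ v 1 ⊗ ⋯ ⊗ v (d-1)` of vectors written in coordinates. -/
def tensorOf {d : ℕ} (v : Fin d → (β →₀ K)) : TPow K β d :=
  ∑ k ∈ Fintype.piFinset (fun i => (v i).support),
    (∏ i, (v i) (k i)) • Finsupp.single k (1 : K)

/-- parity of a `Fin 3`-valued part marker: `0 = 𝔞`, `1 = 𝔠` (both even), `2 = odd`. -/
def par2 (x : Fin 3) : ZMod 2 := if x = 2 then 1 else 0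

/-- total parity of a basis tuple -/
def tupleParity (p : β → Fin 3) {d : ℕ} (k : Fin d → β) : ZMod 2 := ∑ i, par2 (p (k i))

/-- the even part of the tensor power (span of basis tuples of even total parity) -/
def evenPart (p : β → Fin 3) (d : ℕ) : Submodule K (TPow K β d) :=
  Finsupp.supported K K {k | tupleParity p k = 0}

/-- the odd part of the tensor power -/
def oddPart (p : β → Fin 3) (d : ℕ) : Submodule K (TPow K β d) :=
  Finsupp.supported K K {k | tupleParity p k = 1}

/-- the sign count `⟨σ; v⟩` for the signed place-permutation action -/
def permSign (p : β → Fin 3) {d : ℕ} (σ : Equiv.Perm (Fin d)) (k : Fin d → β) : ℕ :=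
  (Finset.univ.filter fun q : Fin d × Fin d =>
     q.1 < q.2 ∧ σ⁻¹ q.2 < σ⁻¹ q.1 ∧ p (k q.1) = 2 ∧ p (k q.2) = 2).card

/-- the signed place-permutation action of `σ ∈ S_d` on `V^{⊗ d}` -/
def permAct (p : β → Fin 3) {d : ℕ} (σ : Equiv.Perm (Fin d)) :
    TPow K β d →ₗ[K] TPow K β d :=
  Finsupp.lsum K fun k => LinearMap.toSpanSingleton K _
    (((-1 : K) ^ permSign p σ k) • Finsupp.single (k ∘ σ) (1 : K))

/-- the divided power `Γ^d V`: invariants of the signed place-permutation action -/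
def Gamma (p : β → Fin 3) (d : ℕ) : Submodule K (TPow K β d) :=
  ⨅ σ : Equiv.Perm (Fin d), LinearMap.eqLocus (permAct K p σ) LinearMap.id

/-- A calibrated family of vectors of the "supermodule" `β →₀ K`: an index set `ι`
with a partition into `𝔞`- (`part = 0`), `𝔠`- (`part = 1`) and odd (`part = 2`) parts,
a total order (realized through an `ℕ`-encoding `ord`) and the actual vectors `vec`. -/
structure CalFamily (β : Type) : Type 1 where
  ι : Type
  fin : Fintype ι
  deq : DecidableEq ι
  part : ι → Fin 3
  ord : ι → ℕ
  vec : ι → (β →₀ K)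

attribute [instance] CalFamily.fin CalFamily.deq

namespace CalFamily

variable {K}
variable (F : CalFamily K β)

/-- `Seq(B,d)`: tuples in which an entry may repeat only if it is even -/
def IsSeq {d : ℕ} (b : Fin d → F.ι) : Prop :=
  ∀ i j : Fin d, i ≠ j → b i = b j → F.part (b i) ≠ 2

/-- the inversion count `⟨b⟩` among odd entries -/
def inversions {d : ℕ} (b : Fin d → F.ι) : ℕ :=
  (Finset.univ.filter fun q : Fin d × Fin d =>
    q.1 < q.2 ∧ F.part (b q.1) = 2 ∧ F.part (b q.2) = 2 ∧ F.ord (b q.2) < F.ord (b q.1)).card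

/-- the `S_d`-orbit of a tuple -/
def orbit {d : ℕ} (b : Fin d → F.ι) : Finset (Fin d → F.ι) :=
  Finset.univ.filter fun b' => ∃ σ : Equiv.Perm (Fin d), b' = b ∘ σ

/-- the element `x_b ∈ Γ^d V` -/
def x {d : ℕ} (b : Fin d → F.ι) : TPow K β d :=
  ∑ b' ∈ F.orbit b,
    ((-1 : K) ^ (F.inversions b + F.inversions b')) • tensorOf K (fun i => F.vec (b' i))

/-- the factorial `[b]^!_𝔠` -/
def mfac {d : ℕ} (b : Fin d → F.ι) : ℕ :=
  ∏ c ∈ Finset.univ.filter (fun c : F.ι => F.part c = 1),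
    (Finset.univ.filter fun i : Fin d => b i = c).card.factorial

/-- the element `y_b = [b]^!_𝔠 • x_b` -/
def y {d : ℕ} (b : Fin d → F.ι) : TPow K β d := F.mfac b • F.x b

end CalFamily

/-- the modified divided power `Γ̃^d V`, as a submodule of the coordinate tensor power -/
def gammaTilde (F : CalFamily K β) (d : ℕ) : Submodule K (TPow K β d) :=
  Submodule.span K {w | ∃ b : Fin d → F.ι, F.IsSeq b ∧ w = F.y b}

/-- the standard calibrated family: the basis of `β →₀ K` given by `β` itself -/
def stdFam (p : β → Fin 3) (ord : β → ℕ) : CalFamily K β :=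
  ⟨β, inferInstance, inferInstance, p, ord, fun b => Finsupp.single b 1⟩

/-- the Koszul sign `⟨a, v⟩ = #{(k,l) | k > l, a_k odd, v_l odd}` -/
def koszul {α : Type} (pA : α → Fin 3) (pV : β → Fin 3) {d : ℕ}
    (a : Fin d → α) (k : Fin d → β) : ℕ :=
  (Finset.univ.filter fun q : Fin d × Fin d =>
    q.2 < q.1 ∧ pA (a q.1) = 2 ∧ pV (k q.2) = 2).card

/-- the (left) action of an element `x` of the `d`-th tensor power of a superalgebra `A`
(with basis `α` and structure constants `act`) on the `d`-th tensor power of a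
supermodule with basis `β`, including Koszul signs. -/
def kact {α : Type} [Fintype α] [DecidableEq α]
    (pA : α → Fin 3) (pV : β → Fin 3) (act : α → β → (β →₀ K)) {d : ℕ}
    (x : TPow K α d) : TPow K β d →ₗ[K] TPow K β d :=
  Finsupp.lsum K fun k => LinearMap.toSpanSingleton K _
    (x.sum fun a r => (r * (-1 : K) ^ koszul pA pV a k) • tensorOf K (fun i => act (a i) (k i)))

/-- the right action analogue of `kact` (for right supermodules), `v ↦ v · x` -/
def rkact {α : Type} [Fintype α] [DecidableEq α]
    (pA : α → Fin 3) (pV : β → Fin 3) (ract : β → α → (β →₀ K)) {d : ℕ}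
    (x : TPow K α d) : TPow K β d →ₗ[K] TPow K β d :=
  Finsupp.lsum K fun k => LinearMap.toSpanSingleton K _
    (x.sum fun a r => (r * (-1 : K) ^ koszul pV pA k a) • tensorOf K (fun i => ract (k i) (a i)))

/-- shortest coset representatives for `(S_c × S_e) \ S_{c+e}` -/
def shuffles (c e : ℕ) : Finset (Equiv.Perm (Fin (c + e))) :=
  Finset.univ.filter fun σ =>
    (∀ i j : Fin (c + e), (i : ℕ) < c → (j : ℕ) < c → i < j → σ⁻¹ i < σ⁻¹ j) ∧
    (∀ i j : Fin (c + e), c ≤ (i : ℕ) → c ≤ (j : ℕ) → i < j → σ⁻¹ i < σ⁻¹ j)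

/-- the outer (concatenation) product `V^{⊗c} ⊗ V^{⊗e} → V^{⊗(c+e)}`, as a bilinear map -/
def outerL (c e : ℕ) : TPow K β c →ₗ[K] TPow K β e →ₗ[K] TPow K β (c + e) :=
  Finsupp.lsum K fun k1 => LinearMap.toSpanSingleton K _
    (Finsupp.lsum K fun k2 => LinearMap.toSpanSingleton K _
      (Finsupp.single (Fin.append k1 k2) (1 : K)))

/-- the star product `w1 * w2 = Σ_σ (w1 ⊗ w2)^σ` over shortest coset representatives -/
def starL (p : β → Fin 3) (c e : ℕ) : TPow K β c →ₗ[K] TPow K β e →ₗ[K] TPow K β (c + e) :=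
  ∑ σ ∈ shuffles c e, (outerL K c e).compr₂ (permAct K p σ)

/-- cast of a coordinate tensor power along an equality of tensor degrees -/
def castTPow {c d : ℕ} (h : c = d) : TPow K β c →ₗ[K] TPow K β d :=
  Finsupp.lmapDomain K K (fun k => k ∘ (Fin.cast h.symm))

/-- embedding of coordinates along a map of basis index sets -/
def embTPow {γ : Type} (f : β → γ) (d : ℕ) : TPow K β d →ₗ[K] TPow K γ d :=
  Finsupp.lmapDomain K K (fun k => f ∘ k)

end

end Paper
namespace Paper

noncomputable section

variable (K : Type) [CommRing K]

/-- the index of the `q`-th position of the `p`-th block (blocks ordered via `ow`,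
with sizes `c`) inside `Fin d`, `d = Σ c` -/
def blockIdx {ι : Type} [Fintype ι] [DecidableEq ι] (ow : ι → ℕ) (c : ι → ℕ) {d : ℕ}
    (hd : ∑ p, c p = d) (p : ι) (q : Fin (c p)) : Fin d :=
  ⟨(∑ p' ∈ Finset.univ.filter (fun p' => ow p' < ow p), c p') + (q : ℕ), by
    have hq := q.2
    have hsub : (Finset.univ.filter (fun p' => ow p' < ow p)) ⊆ Finset.univ.erase p := by
      intro x hx
      rcases Finset.mem_filter.mp hx with ⟨_, hlt⟩
      exact Finset.mem_erase.mpr ⟨by intro hxp; rw [hxp] at hlt; exact lt_irrefl _ hlt, Finset.mem_univ x⟩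
    have h1 : (∑ p' ∈ Finset.univ.filter (fun p' => ow p' < ow p), c p')
        ≤ ∑ p' ∈ Finset.univ.erase p, c p' :=
      Finset.sum_le_sum_of_subset hsub
    have h2 := Finset.sum_erase_add Finset.univ c (Finset.mem_univ p)
    omega⟩

/-- iterated outer (concatenation) product of a finite family of tensors,
concatenated in the order given by `ow` -/
def bigOuter {β : Type} [Fintype β] [DecidableEq β] {ι : Type} [Fintype ι] [DecidableEq ι]
    (ow : ι → ℕ) (c : ι → ℕ) {d : ℕ}
    (hd : ∑ p, c p = d) (v : ∀ p : ι, TPow K β (c p)) : TPow K β d :=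
  ∑ k : Fin d → β, (∏ p, (v p) (fun q => k (blockIdx ow c hd p q))) • Finsupp.single k (1 : K)

end

end Paper
namespace Paper

noncomputable section

variable (K : Type) [CommRing K]

/-- bilinear extension of structure constants `f` to the spanned free modules -/
def pairExt {α β γ : Type} (f : α → β → (γ →₀ K)) (x : α →₀ K) (y : β →₀ K) : γ →₀ K :=
  x.sum fun a r => y.sum fun b s => (r * s) • f a b

/-- linear extension of a basis-valued map -/
def oneExt {α γ : Type} (f : α → (γ →₀ K)) (x : α →₀ K) : γ →₀ K :=
  x.sum fun a r => r • f a

variable {β : Type} [Fintype β] [DecidableEq β]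

/-- the bilinear form on `β →₀ K` with Gram matrix `G` -/
def formV (G : β → β → K) : (β →₀ K) →ₗ[K] (β →₀ K) →ₗ[K] K :=
  Finsupp.lsum K fun b => LinearMap.toSpanSingleton K _
    (Finsupp.lsum K fun b' => LinearMap.toSpanSingleton K K (G b b'))

/-- the induced (signed) bilinear form `(·,·)_d` on the `d`-th tensor power -/
def formD (p : β → Fin 3) (G : β → β → K) (d : ℕ) :
    TPow K β d →ₗ[K] TPow K β d →ₗ[K] K :=
  Finsupp.lsum K fun k => LinearMap.toSpanSingleton K _
    (Finsupp.lsum K fun k' => LinearMap.toSpanSingleton K K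
      (((-1 : K) ^ koszul p p k k') * ∏ i, G (k i) (k' i)))

end

end Paper
open Classical

namespace Paper

noncomputable section

/-! ## Combinatorics of multipartitions -/

section Comb

variable (ℓ n : ℕ)

/-- `I`-multicompositions with at most `n` parts, `I = {0,…,ℓ}` -/
abbrev MultiComp := Fin (ℓ+1) → Fin n → ℕ

variable {ℓ n}

def mcSize (μ : MultiComp ℓ n) : ℕ := ∑ i, ∑ r, μ i r

def IsMultiPartition (μ : MultiComp ℓ n) : Prop := ∀ i, Antitone (μ i)

def norms (μ : MultiComp ℓ n) : Fin (ℓ+1) → ℕ := fun i => ∑ r, μ i r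

/-- dominance order on compositions -/
def Dominates (lam mu : Fin n → ℕ) : Prop :=
  ∀ s : Fin n, ∑ r ∈ Finset.univ.filter (· ≤ s), lam r ≤ ∑ r ∈ Finset.univ.filter (· ≤ s), mu r

/-- the order `⊴_I` on `ℤ_{≥0}^I` determined by a partial order `po` on `I` -/
def domI (po : Fin (ℓ+1) → Fin (ℓ+1) → Prop) (a b : Fin (ℓ+1) → ℕ) : Prop :=
  ∀ i, ∑ j ∈ Finset.univ.filter (fun j => po i j), a j ≤
       ∑ j ∈ Finset.univ.filter (fun j => po i j), b j

/-- the order `≤_I` on multicompositions -/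
def leI (po : Fin (ℓ+1) → Fin (ℓ+1) → Prop) (lam mu : MultiComp ℓ n) : Prop :=
  (domI po (norms lam) (norms mu) ∧ norms lam ≠ norms mu) ∨
  (norms lam = norms mu ∧ ∀ i, Dominates (lam i) (mu i))

/-- `ι_i(λ)`: the multicomposition concentrated in component `i` -/
def iotaP (i : Fin (ℓ+1)) (lam : Fin n → ℕ) : MultiComp ℓ n :=
  fun i' => if i' = i then lam else 0

/-- the one-row partition `(m)` -/
def rowP (n m : ℕ) : Fin n → ℕ := fun r => if (r : ℕ) = 0 then m else 0

/-- the one-column partition `(1^m)` -/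
def colP (n m : ℕ) : Fin n → ℕ := fun r => if (r : ℕ) < m then 1 else 0

/-- the conjugate partition -/
def conjP (lam : Fin n → ℕ) : Fin n → ℕ :=
  fun c => (Finset.univ.filter fun r => (c : ℕ) < lam r).card

/-- reversal of the components of a multicomposition -/
def revM (μ : MultiComp ℓ n) : MultiComp ℓ n := fun i => μ i.rev

/-- componentwise conjugate of a multipartition -/
def conjM (μ : MultiComp ℓ n) : MultiComp ℓ n := fun i => conjP (μ i)

/-- componentwise sum of multicompositions -/
def addM (lam mu : MultiComp ℓ n) : MultiComp ℓ n := fun i r => lam i r + mu i r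

end Comb

/-! ## Filling tuples (used to construct the idempotents `η_μ`) -/

def cumSum (c : ℕ → ℕ) (m : ℕ) : ℕ := ∑ m' ∈ Finset.range (m+1), c m'

def fillIdx (c : ℕ → ℕ) (k : ℕ) : ℕ :=
  if h : ∃ m, k < cumSum c m then Nat.find h else 0

def mcFun {ℓ n : ℕ} (μ : MultiComp ℓ n) : ℕ → ℕ := fun m =>
  if h : m < (ℓ+1) * n then
    μ (finProdFinEquiv.symm (⟨m, h⟩ : Fin ((ℓ+1) * n))).1
      (finProdFinEquiv.symm (⟨m, h⟩ : Fin ((ℓ+1) * n))).2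
  else 0

def decodeIdx {ℓ n : ℕ} [NeZero n] (m : ℕ) : Fin (ℓ+1) × Fin n :=
  if h : m < (ℓ+1) * n then finProdFinEquiv.symm ⟨m, h⟩ else ((0 : Fin (ℓ+1)), ⟨0, Nat.pos_of_ne_zero (NeZero.ne n)⟩)

/-- a tuple realizing the multicomposition `μ`, listing the pairs `(i,r)` with
multiplicities `μ i r` in the lexicographic order -/
def etaTuple {ℓ n : ℕ} [NeZero n] (μ : MultiComp ℓ n) (d : ℕ) :
    Fin d → Fin (ℓ+1) × Fin n :=
  fun k => decodeIdx (fillIdx (mcFun μ) k)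

/-! ## Generalized Schur algebras presented by a calibrated basis with idempotents -/

/-- The data of a superalgebra `A` over `F` presented by a finite calibrated basis `βA`
(with `part = 0/1/2` for `𝔞/𝔠/odd`), structure constants `mulA`, distinguished
standard idempotent basis elements `eA i` for `i ∈ I = {0,…,ℓ}`, and a partial
order `po` on `I` (refining nothing in particular here). -/
structure SchurAlgData (F : Type) [CommRing F] (ℓ : ℕ) : Type 1 where
  βA : Type
  finA : Fintype βA
  deqA : DecidableEq βA
  pA : βA → Fin 3
  ordA : βA → ℕ
  mulA : βA → βA → (βA →₀ F)
  eA : Fin (ℓ+1) → βA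
  po : Fin (ℓ+1) → Fin (ℓ+1) → Prop

attribute [instance] SchurAlgData.finA SchurAlgData.deqA

namespace SchurAlgData

variable {F : Type} [CommRing F] {ℓ : ℕ} (S : SchurAlgData F ℓ) (n d : ℕ)

/-- the basis of the matrix superalgebra `M_n(A)` -/
abbrev MBt := S.βA × Fin n × Fin n

def pM : S.MBt n → Fin 3 := fun m => S.pA m.1

def ordM : S.MBt n → ℕ := fun m => (S.ordA m.1 * n + (m.2.1 : ℕ)) * n + (m.2.2 : ℕ)

/-- structure constants of `M_n(A)`: `ξ^b_{rs} ξ^{b'}_{r's'} = δ_{s,r'} (b b')_{r,s'}` -/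
def mulM : S.MBt n → S.MBt n → (S.MBt n →₀ F) := fun x y =>
  if x.2.2 = y.2.1 then Finsupp.mapDomain (fun c => (c, x.2.1, y.2.2)) (S.mulA x.1 y.1)
  else 0

/-- the generalized Schur algebra `T^A(n,d) = Γ̃^d M_n(A)`, in coordinates -/
def alg : Submodule F (TPow F (S.MBt n) d) :=
  gammaTilde F (stdFam F (S.pM n) (S.ordM n)) d

/-- left multiplication by `x` in (the ambient space of) `T^A(n,d)` -/
def amul (x : TPow F (S.MBt n) d) : TPow F (S.MBt n) d →ₗ[F] TPow F (S.MBt n) d :=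
  kact F (S.pM n) (S.pM n) (fun a b => S.mulM n a b) x

/-- right multiplication by `x` (with the appropriate Koszul signs) -/
def ramul (x : TPow F (S.MBt n) d) : TPow F (S.MBt n) d →ₗ[F] TPow F (S.MBt n) d :=
  rkact F (S.pM n) (S.pM n) (fun b a => S.mulM n b a) x

/-- the set of even elements of the ambient space of `T^A(n,d)` -/
def evA : Set (TPow F (S.MBt n) d) := (evenPart F (S.pM n) d : Set _)

/-- the set of odd elements -/
def odA : Set (TPow F (S.MBt n) d) := (oddPart F (S.pM n) d : Set _)

/-- the idempotent `η_μ = η^{e_0}_{μ^{(0)}} * ⋯ * η^{e_ℓ}_{μ^{(ℓ)}} ∈ T^A(n,d)` -/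
def eta [NeZero n] (μ : MultiComp ℓ n) : TPow F (S.MBt n) d :=
  (stdFam F (S.pM n) (S.ordM n)).y
    (fun k => (S.eA (etaTuple μ d k).1, (etaTuple μ d k).2, (etaTuple μ d k).2))

def lStable (N : Submodule F (TPow F (S.MBt n) d)) : Prop :=
  ∀ x ∈ S.alg n d, ∀ v ∈ N, S.amul n d x v ∈ N

def rStable (N : Submodule F (TPow F (S.MBt n) d)) : Prop :=
  ∀ x ∈ S.alg n d, ∀ v ∈ N, S.ramul n d x v ∈ N

/-- the left ideal of `T^A(n,d)` generated by a set -/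
def lIdeal (T : Set (TPow F (S.MBt n) d)) : Submodule F (TPow F (S.MBt n) d) :=
  sInf {N | T ⊆ N ∧ S.lStable n d N}

/-- the right ideal generated by a set -/
def rIdeal (T : Set (TPow F (S.MBt n) d)) : Submodule F (TPow F (S.MBt n) d) :=
  sInf {N | T ⊆ N ∧ S.rStable n d N}

/-- the two-sided ideal generated by a set -/
def tIdeal (T : Set (TPow F (S.MBt n) d)) : Submodule F (TPow F (S.MBt n) d) :=
  sInf {N | T ⊆ N ∧ S.lStable n d N ∧ S.rStable n d N}

/-- the idempotents `η_μ` for multipartitions `μ >_I λ` -/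
def hiSet [NeZero n] (lam : MultiComp ℓ n) : Set (TPow F (S.MBt n) d) :=
  {w | ∃ μ : MultiComp ℓ n, mcSize μ = d ∧ IsMultiPartition μ ∧
        leI S.po lam μ ∧ μ ≠ lam ∧ w = S.eta n d μ}

/-- the two-sided ideal `T^A(n,d)^{> λ}` -/
def idealHi [NeZero n] (lam : MultiComp ℓ n) : Submodule F (TPow F (S.MBt n) d) :=
  S.tIdeal n d (S.hiSet n d lam)

/-- the standard module `Δ(λ)` is the subquotient `D1 λ / D2 λ` of the regular module -/
def D1 [NeZero n] (lam : MultiComp ℓ n) : Submodule F (TPow F (S.MBt n) d) :=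
  S.lIdeal n d {S.eta n d lam}

def D2 [NeZero n] (lam : MultiComp ℓ n) : Submodule F (TPow F (S.MBt n) d) :=
  S.D1 n d lam ⊓ S.idealHi n d lam

/-- the right standard module `Δ^op(λ)` is the subquotient `R1 λ / R2 λ` -/
def R1 [NeZero n] (lam : MultiComp ℓ n) : Submodule F (TPow F (S.MBt n) d) :=
  S.rIdeal n d {S.eta n d lam}

def R2 [NeZero n] (lam : MultiComp ℓ n) : Submodule F (TPow F (S.MBt n) d) :=
  S.R1 n d lam ⊓ S.idealHi n d lam

end SchurAlgData

/-! ## Relational isomorphisms of subquotient supermodules -/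

/-- `SubQuotIso Ta evA odA aM aN evM odM evN odN Phi Plo Qhi Qlo ε` says that the
subquotient `Phi/Plo` (of an ambient module `M` on which the algebra elements act via
`aM`) is isomorphic, via a supermodule isomorphism of parity `ε`, to the subquotient
`Qhi/Qlo` (with action `aN`). Over a field, an isomorphism of subquotients is always
induced by an ambient linear map, which is how it is encoded here. -/
def SubQuotIso {F : Type} [CommRing F] {A M N : Type}
    [AddCommGroup M] [Module F M] [AddCommGroup N] [Module F N]
    (Ta evA odA : Set A) (aM : A → M →ₗ[F] M) (aN : A → N →ₗ[F] N)
    (evM odM : Set M) (evN odN : Set N)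
    (Phi Plo : Submodule F M) (Qhi Qlo : Submodule F N) (ε : Bool) : Prop :=
  Plo ≤ Phi ∧ Qlo ≤ Qhi ∧
  ∃ f : M →ₗ[F] N,
    (∀ v ∈ Phi, f v ∈ Qhi) ∧ (∀ v ∈ Plo, f v ∈ Qlo) ∧
    (∀ w ∈ Qhi, ∃ v ∈ Phi, f v - w ∈ Qlo) ∧
    (∀ v ∈ Phi, f v ∈ Qlo → v ∈ Plo) ∧
    (∀ x ∈ Ta ∩ evA, ∀ v ∈ Phi, f (aM x v) - aN x (f v) ∈ Qlo) ∧
    (∀ x ∈ Ta ∩ odA, ∀ v ∈ Phi,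
       f (aM x v) - (if ε then (-1 : F) else 1) • aN x (f v) ∈ Qlo) ∧
    (∀ v ∈ Phi, v ∈ evM → ∃ w ∈ (if ε then odN else evN), f v - w ∈ Qlo) ∧
    (∀ v ∈ Phi, v ∈ odM → ∃ w ∈ (if ε then evN else odN), f v - w ∈ Qlo)

/-! ## Supermodules over `T^A(n,d)`, filtrations and tilting modules -/

/-- a supermodule over `T^A(n,d)` presented in coordinates: a basis `βV` with
parities `pV` and the structure constants `actV` of the action of `M_n(A)` -/
structure ModSetting {F : Type} [CommRing F] {ℓ : ℕ} (S : SchurAlgData F ℓ) (n : ℕ) :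
    Type 1 where
  βV : Type
  finV : Fintype βV
  deqV : DecidableEq βV
  pV : βV → Fin 3
  actV : S.MBt n → βV → (βV →₀ F)

attribute [instance] ModSetting.finV ModSetting.deqV

namespace ModSetting

variable {F : Type} [CommRing F] {ℓ : ℕ} {S : SchurAlgData F ℓ} {n : ℕ}
variable (MS : ModSetting S n) (d : ℕ)

/-- the action of elements of (the ambient space of) `T^A(n,d)` -/
def act (x : TPow F (S.MBt n) d) : TPow F MS.βV d →ₗ[F] TPow F MS.βV d :=
  kact F (S.pM n) MS.pV MS.actV x

def evM : Set (TPow F MS.βV d) := (evenPart F MS.pV d : Set _)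

def odM : Set (TPow F MS.βV d) := (oddPart F MS.pV d : Set _)

def stable (N : Submodule F (TPow F MS.βV d)) : Prop :=
  ∀ x ∈ S.alg n d, ∀ v ∈ N, MS.act d x v ∈ N

/-- the factor `Whi/Wlo` is isomorphic (as a supermodule, up to parity shift)
to the standard module `Δ(λ)` -/
def stdFactorAt [NeZero n] (Whi Wlo : Submodule F (TPow F MS.βV d))
    (lam : MultiComp ℓ n) : Prop :=
  ∃ ε : Bool,
    SubQuotIso (S.alg n d : Set _) (S.evA n d) (S.odA n d)
      (MS.act d) (fun x => S.amul n d x)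
      (MS.evM d) (MS.odM d) (S.evA n d) (S.odA n d)
      Whi Wlo (S.D1 n d lam) (S.D2 n d lam) ε

/-- the factor `Whi/Wlo` is isomorphic (as a supermodule, up to parity shift) to the
costandard module `∇(λ) = (Δ^op(λ))^*`; this is encoded by a perfect contravariant
pairing with the right standard module `Δ^op(λ) = R1 λ / R2 λ`. -/
def nablaFactorAt [NeZero n] (Whi Wlo : Submodule F (TPow F MS.βV d))
    (lam : MultiComp ℓ n) : Prop :=
  ∃ ε : Bool, ∃ B : TPow F MS.βV d →ₗ[F] TPow F (S.MBt n) d →ₗ[F] F,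
    (∀ v ∈ Wlo, ∀ w ∈ S.R1 n d lam, B v w = 0) ∧
    (∀ v ∈ Whi, ∀ w ∈ S.R2 n d lam, B v w = 0) ∧
    (∀ v ∈ Whi, (∀ w ∈ S.R1 n d lam, B v w = 0) → v ∈ Wlo) ∧
    (∀ w ∈ S.R1 n d lam, (∀ v ∈ Whi, B v w = 0) → w ∈ S.R2 n d lam) ∧
    (∀ v ∈ Whi, ∀ pv : Bool, v ∈ (if pv then MS.odM d else MS.evM d) →
      ∀ w ∈ S.R1 n d lam, ∀ pw : Bool, w ∈ (if pw then S.odA n d else S.evA n d) →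
        ((pv != pw) ≠ ε → B v w = 0)) ∧
    (∀ x ∈ (S.alg n d : Set _), ∀ px : Bool, x ∈ (if px then S.odA n d else S.evA n d) →
      ∀ v ∈ Whi, ∀ pv : Bool, v ∈ (if pv then MS.odM d else MS.evM d) →
      ∀ w ∈ S.R1 n d lam, ∀ pw : Bool, w ∈ (if pw then S.odA n d else S.evA n d) →
        B (MS.act d x v) w =
          (if px && (pv != pw) then (-1 : F) else 1) * B v (S.ramul n d x w))

/-- a standard filtration of `hi/lo` with all factors of the form `Δ(λ)`, `λ ∈ allowed` -/
def IsStdFiltBy [NeZero n] (lo hi : Submodule F (TPow F MS.βV d))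
    (allowed : Set (MultiComp ℓ n)) : Prop :=
  ∃ L : ℕ, ∃ W : Fin (L+1) → Submodule F (TPow F MS.βV d),
    Monotone W ∧ W 0 = lo ∧ W (Fin.last L) = hi ∧
    (∀ r, MS.stable d (W r)) ∧
    ∀ r : Fin L, ∃ lam, lam ∈ allowed ∧ mcSize lam = d ∧ IsMultiPartition lam ∧
      MS.stdFactorAt d (W r.succ) (W r.castSucc) lam

/-- a costandard filtration of `hi/lo` -/
def IsCoStdFilt [NeZero n] (lo hi : Submodule F (TPow F MS.βV d)) : Prop :=
  ∃ L : ℕ, ∃ W : Fin (L+1) → Submodule F (TPow F MS.βV d),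
    Monotone W ∧ W 0 = lo ∧ W (Fin.last L) = hi ∧
    (∀ r, MS.stable d (W r)) ∧
    ∀ r : Fin L, ∃ lam : MultiComp ℓ n, mcSize lam = d ∧ IsMultiPartition lam ∧
      MS.nablaFactorAt d (W r.succ) (W r.castSucc) lam

/-- tilting supermodule: admits both a standard and a costandard filtration -/
def IsTilting [NeZero n] (V : Submodule F (TPow F MS.βV d)) : Prop :=
  MS.IsStdFiltBy d ⊥ V Set.univ ∧ MS.IsCoStdFilt d ⊥ V

/-- indecomposability (as a supermodule) -/
def Indec (V : Submodule F (TPow F MS.βV d)) : Prop :=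
  ¬ ∃ U U' : Submodule F (TPow F MS.βV d),
      MS.stable d U ∧ MS.stable d U' ∧ U ⊓ U' = ⊥ ∧ U ⊔ U' = V ∧ U ≠ ⊥ ∧ U' ≠ ⊥

/-- `V` is (a copy of) the indecomposable tilting supermodule `T(λ)`:
it is tilting, indecomposable, contains a copy of `Δ(λ)` such that the quotient has
a standard filtration with factors `Δ(μ)`, `μ < λ`. -/
def IsIndecTilting [NeZero n] (lam : MultiComp ℓ n)
    (V : Submodule F (TPow F MS.βV d)) : Prop :=
  MS.IsTilting d V ∧ MS.Indec d V ∧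
  ∃ U : Submodule F (TPow F MS.βV d), U ≤ V ∧ MS.stable d U ∧
    MS.stdFactorAt d U ⊥ lam ∧
    MS.IsStdFiltBy d U V {μ | leI S.po μ lam ∧ μ ≠ lam}

/-- full tilting supermodule: tilting, and every indecomposable tilting supermodule
`T(λ)` occurs as a direct summand -/
def IsFullTilting [NeZero n] (V : Submodule F (TPow F MS.βV d)) : Prop :=
  MS.IsTilting d V ∧
  ∀ lam : MultiComp ℓ n, mcSize lam = d → IsMultiPartition lam →
    ∃ U U' : Submodule F (TPow F MS.βV d),
      MS.stable d U ∧ MS.stable d U' ∧ U ⊓ U' = ⊥ ∧ U ⊔ U' = V ∧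
      MS.IsIndecTilting d lam U

end ModSetting

end

end Paper
namespace Paper

noncomputable section

/-! ## The extended zigzag algebra -/

variable (F : Type) [CommRing F] (ℓ : ℕ)

/-- the basis of the extended zigzag algebra `Z`:
`e i` (`i ∈ I`), `a_{j,j+1}`, `a_{j+1,j}`, `c j` (`j ∈ J`) -/
abbrev ZB := Fin (ℓ+1) ⊕ (Fin ℓ ⊕ (Fin ℓ ⊕ Fin ℓ))

variable {ℓ}

def eZ (i : Fin (ℓ+1)) : ZB ℓ := Sum.inl i
/-- the arrow `a_{j,j+1}` (target `j`, source `j+1`) -/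
def dZ (j : Fin ℓ) : ZB ℓ := Sum.inr (Sum.inl j)
/-- the arrow `a_{j+1,j}` (target `j+1`, source `j`) -/
def uZ (j : Fin ℓ) : ZB ℓ := Sum.inr (Sum.inr (Sum.inl j))
/-- the cycle `c_j = a_{j,j+1} a_{j+1,j}` -/
def cZ (j : Fin ℓ) : ZB ℓ := Sum.inr (Sum.inr (Sum.inr j))

def srcZ : ZB ℓ → Fin (ℓ+1)
  | Sum.inl i => i
  | Sum.inr (Sum.inl j) => j.succ
  | Sum.inr (Sum.inr (Sum.inl j)) => j.castSucc
  | Sum.inr (Sum.inr (Sum.inr j)) => j.castSucc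

def tgtZ : ZB ℓ → Fin (ℓ+1)
  | Sum.inl i => i
  | Sum.inr (Sum.inl j) => j.castSucc
  | Sum.inr (Sum.inr (Sum.inl j)) => j.succ
  | Sum.inr (Sum.inr (Sum.inr j)) => j.castSucc

/-- calibration of `Z`: `𝔞 = span(e_i)`, `𝔠 = span(c_j)`, odd part spanned by arrows -/
def pZ : ZB ℓ → Fin 3
  | Sum.inl _ => 0
  | Sum.inr (Sum.inr (Sum.inr _)) => 1
  | _ => 2

def ordZ : ZB ℓ → ℕ
  | Sum.inl i => (i : ℕ)
  | Sum.inr (Sum.inl j) => (ℓ+1) + (j : ℕ)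
  | Sum.inr (Sum.inr (Sum.inl j)) => (ℓ+1) + ℓ + (j : ℕ)
  | Sum.inr (Sum.inr (Sum.inr j)) => (ℓ+1) + 2*ℓ + (j : ℕ)

/-- structure constants of the extended zigzag algebra -/
def mulZ : ZB ℓ → ZB ℓ → (ZB ℓ →₀ F) := fun b b' =>
  if srcZ b = tgtZ b' then
    match b, b' with
    | Sum.inl _, y => Finsupp.single y 1
    | y, Sum.inl _ => Finsupp.single y 1
    | Sum.inr (Sum.inl j), Sum.inr (Sum.inr (Sum.inl _)) => Finsupp.single (cZ j) 1
    | Sum.inr (Sum.inr (Sum.inl j)), Sum.inr (Sum.inl _) =>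
        if h : (j : ℕ) + 1 < ℓ then Finsupp.single (cZ ⟨(j:ℕ)+1, h⟩) 1 else 0
    | _, _ => 0
  else 0

variable (ℓ) in
/-- the extended zigzag algebra, packaged as the data of a generalized Schur algebra;
the heredity order on `I = {0,…,ℓ}` is the natural total order -/
def zigData : SchurAlgData F ℓ :=
  ⟨ZB ℓ, inferInstance, inferInstance, pZ, ordZ, mulZ F, eZ, fun i j => i ≤ j⟩

/-! ## The full tilting `Z`-supermodule `𝖳` -/

variable (ℓ) in
/-- basis of `𝖳 = ΠL(0) ⊕ ⊕_{j ∈ J} Z e_j`: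
`u0` spans `Π𝖳(0) = ΠL(0)`; `Et j = e_j`, `Ct j = c_j`, `Ut j = a_{j+1,j}` and
`Dt t = a_{t,t+1}` (the latter lying in `Z e_{t+1}`) are the basis elements of the
left ideals `Z e_j = Π𝖳(j+1)`. -/
abbrev TB := Unit ⊕ (Fin ℓ ⊕ (Fin ℓ ⊕ (Fin ℓ ⊕ {t : Fin ℓ // (t : ℕ) + 1 < ℓ})))

def u0 : TB ℓ := Sum.inl ()
def Et (j : Fin ℓ) : TB ℓ := Sum.inr (Sum.inl j)
def Ct (j : Fin ℓ) : TB ℓ := Sum.inr (Sum.inr (Sum.inl j))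
def Ut (j : Fin ℓ) : TB ℓ := Sum.inr (Sum.inr (Sum.inr (Sum.inl j)))
def Dt (t : Fin ℓ) (h : (t : ℕ) + 1 < ℓ) : TB ℓ := Sum.inr (Sum.inr (Sum.inr (Sum.inr ⟨t, h⟩)))

/-- `compT x = i` when the basis vector `x` lies in the summand `Π𝖳(i)` of `𝖳` -/
def compT : TB ℓ → Fin (ℓ+1)
  | Sum.inl _ => 0
  | Sum.inr (Sum.inl j) => j.succ
  | Sum.inr (Sum.inr (Sum.inl j)) => j.succ
  | Sum.inr (Sum.inr (Sum.inr (Sum.inl j))) => j.succ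
  | Sum.inr (Sum.inr (Sum.inr (Sum.inr t))) => ⟨(t.1 : ℕ) + 2, by have := t.2; omega⟩

/-- calibration of `𝖳`: `𝖳_𝔞 = span(e_j)`, `𝖳_𝔠 = span(c_j)`,
odd part spanned by `u0` and the arrows -/
def pT : TB ℓ → Fin 3
  | Sum.inl _ => 2
  | Sum.inr (Sum.inl _) => 0
  | Sum.inr (Sum.inr (Sum.inl _)) => 1
  | Sum.inr (Sum.inr (Sum.inr _)) => 2

def ordT : TB ℓ → ℕ
  | Sum.inl _ => 0
  | Sum.inr (Sum.inl j) => 1 + (j : ℕ)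
  | Sum.inr (Sum.inr (Sum.inl j)) => 1 + ℓ + (j : ℕ)
  | Sum.inr (Sum.inr (Sum.inr (Sum.inl j))) => 1 + 2*ℓ + (j : ℕ)
  | Sum.inr (Sum.inr (Sum.inr (Sum.inr t))) => 1 + 3*ℓ + (t.1 : ℕ)

/-- underlying element of `Z` of a non-`u0` basis vector of `𝖳` -/
def toZ : TB ℓ → Option (ZB ℓ)
  | Sum.inl _ => none
  | Sum.inr (Sum.inl j) => some (eZ j.castSucc)
  | Sum.inr (Sum.inr (Sum.inl j)) => some (cZ j)
  | Sum.inr (Sum.inr (Sum.inr (Sum.inl j))) => some (uZ j)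
  | Sum.inr (Sum.inr (Sum.inr (Sum.inr t))) => some (dZ t.1)

/-- encoding of elements of the left ideals `Z e_j` (`j ∈ J`) back into `TB` -/
def encB : ZB ℓ → Option (TB ℓ)
  | Sum.inl i => if h : (i : ℕ) < ℓ then some (Et ⟨i, h⟩) else none
  | Sum.inr (Sum.inl t) => if h : (t : ℕ) + 1 < ℓ then some (Dt t h) else none
  | Sum.inr (Sum.inr (Sum.inl j)) => some (Ut j)
  | Sum.inr (Sum.inr (Sum.inr j)) => some (Ct j)

def pushEnc (f : ZB ℓ →₀ F) : TB ℓ →₀ F :=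
  f.sum fun b r =>
    match encB b with
    | Option.some t => Finsupp.single t r
    | Option.none => 0

/-- structure constants of the left `Z`-action on `𝖳` -/
def actT : ZB ℓ → TB ℓ → (TB ℓ →₀ F) := fun z t =>
  match toZ t with
  | Option.none => if z = eZ (0 : Fin (ℓ+1)) then Finsupp.single u0 1 else 0
  | Option.some zb => pushEnc F (mulZ F z zb)

/-- structure constants of the right action on `𝖳` of the Ringel dual `Z' ≅ Z`
(the basis of `Z'` being identified with `ZB` via `e_i ↦ e'_i`, `a ↦ a'`, `c ↦ c'`) -/
def ractT : TB ℓ → ZB ℓ → (TB ℓ →₀ F) := fun t z =>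
  match z with
  | Sum.inl i =>
      match t with
      | Sum.inl _ => if (i : ℕ) = ℓ then Finsupp.single u0 1 else 0
      | t' =>
          match toZ t' with
          | Option.some zb => if (i : ℕ) + (srcZ zb : ℕ) + 1 = ℓ then Finsupp.single t' 1 else 0
          | Option.none => 0
  | Sum.inr (Sum.inr (Sum.inr i)) =>  -- c'_i
      match t with
      | Sum.inr (Sum.inl j) => if (i : ℕ) + (j : ℕ) + 1 = ℓ then Finsupp.single (Ct j) 1 else 0
      | _ => 0
  | Sum.inr (Sum.inr (Sum.inl i)) =>  -- a'_{i+1,i} (resp. a'_{ℓ,ℓ-1} for i = ℓ-1)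
      match t with
      | Sum.inl _ => if h : (i : ℕ) + 1 = ℓ then -(Finsupp.single (Ct ⟨0, by omega⟩) (1 : F)) else 0
      | Sum.inr (Sum.inl p) =>
          if h : (i : ℕ) + (p : ℕ) + 2 = ℓ then Finsupp.single (Dt p (by omega)) 1 else 0
      | Sum.inr (Sum.inr (Sum.inr (Sum.inl p))) =>
          if h : (i : ℕ) + (p : ℕ) + 2 = ℓ then Finsupp.single (Ct ⟨(p : ℕ) + 1, by omega⟩) 1 else 0
      | _ => 0
  | Sum.inr (Sum.inl i) =>  -- a'_{i,i+1} (resp. a'_{ℓ-1,ℓ} for i = ℓ-1)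
      match t with
      | Sum.inr (Sum.inl q) =>
          if h : (i : ℕ) + (q : ℕ) + 1 = ℓ then
            (if h0 : (q : ℕ) = 0 then Finsupp.single u0 1
             else Finsupp.single (Ut ⟨(q : ℕ) - 1, by omega⟩) 1)
          else 0
      | Sum.inr (Sum.inr (Sum.inr (Sum.inr tt))) =>
          if (i : ℕ) + (tt.1 : ℕ) + 2 = ℓ then Finsupp.single (Ct tt.1) 1 else 0
      | _ => 0

/-! ## `M_n(𝖳)` and the bisupermodule `𝒯` -/

variable (ℓ) in
/-- the basis of `M_n(𝖳)` -/
abbrev MTB (n : ℕ) := TB ℓ × Fin n × Fin n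

def pMT {n : ℕ} : MTB ℓ n → Fin 3 := fun m => pT m.1

def ordMT {n : ℕ} : MTB ℓ n → ℕ := fun m => (ordT m.1 * n + (m.2.1 : ℕ)) * n + (m.2.2 : ℕ)

/-- the left action of the basis of `M_n(Z)` on the basis of `M_n(𝖳)` -/
def lactMT {n : ℕ} : (zigData F ℓ).MBt n → MTB ℓ n → (MTB ℓ n →₀ F) := fun x m =>
  if x.2.2 = m.2.1 then Finsupp.mapDomain (fun t => (t, x.2.1, m.2.2)) (actT F x.1 m.1) else 0

/-- the right action of the basis of `M_n(Z')` on the basis of `M_n(𝖳)` -/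
def rmtT {n : ℕ} : MTB ℓ n → (zigData F ℓ).MBt n → (MTB ℓ n →₀ F) := fun m x =>
  if m.2.2 = x.2.1 then Finsupp.mapDomain (fun t => (t, m.2.1, x.2.2)) (ractT F m.1 x.1) else 0

/-- the left action on the column module `Col_n(𝖳)` -/
def lactCol {n : ℕ} : (zigData F ℓ).MBt n → (TB ℓ × Fin n) → ((TB ℓ × Fin n) →₀ F) := fun x c =>
  if x.2.2 = c.2 then Finsupp.mapDomain (fun t => (t, x.2.1)) (actT F x.1 c.1) else 0

variable (ℓ) in
/-- `M_n(𝖳)` as a supermodule over `T^Z(n,d)`, in coordinates -/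
def fullMS (n : ℕ) : ModSetting (zigData F ℓ) n :=
  ⟨MTB ℓ n, inferInstance, inferInstance, pMT, lactMT F⟩

variable (ℓ) in
/-- `Col_n(𝖳)` as a supermodule over `T^Z(n,d)`, in coordinates -/
def colMS (n : ℕ) : ModSetting (zigData F ℓ) n :=
  ⟨TB ℓ × Fin n, inferInstance, inferInstance, fun c => pT c.1, lactCol F⟩

variable (ℓ) in
/-- the `(T^Z(n,d), T^{Z'}(n,d))`-bisupermodule `𝒯 = Γ̃^d M_n(𝖳)` (over `F`) -/
def scrT (n d : ℕ) : Submodule F (TPow F (MTB ℓ n) d) :=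
  gammaTilde F (stdFam F pMT ordMT) d

variable (ℓ) in
/-- the right action of (the ambient space of) `T^{Z'}(n,d)` on the ambient space of `𝒯` -/
def rActT (n d : ℕ) (x : TPow F ((zigData F ℓ).MBt n) d) :
    TPow F (MTB ℓ n) d →ₗ[F] TPow F (MTB ℓ n) d :=
  rkact F ((zigData F ℓ).pM n) pMT (rmtT F) x

variable (ℓ) in
/-- the calibrated family presenting `Col_n(Π𝖳(i))` inside `Col_n(𝖳)` -/
def colFam (n : ℕ) (i : Fin (ℓ+1)) : CalFamily F (TB ℓ × Fin n) :=
  ⟨{x : TB ℓ × Fin n // compT x.1 = i}, inferInstance, inferInstance,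
   fun x => pT x.1.1, fun x => ordT x.1.1 * n + (x.1.2 : ℕ), fun x => Finsupp.single x.1 1⟩

variable (ℓ) in
/-- the tilting supermodule `𝒯^d_i = Γ̃^d Col_n(Π𝖳(i))` over `T^Z(n,d)` -/
def scrTi (n d : ℕ) (i : Fin (ℓ+1)) : Submodule F (TPow F (TB ℓ × Fin n) d) :=
  gammaTilde F (colFam F ℓ n i) d

end

end Paper
namespace Paper


noncomputable section S5aux

set_option linter.unusedSectionVars false

open Finsupp

variable {F : Type} [Field F]
variable {β : Type} [Fintype β] [DecidableEq β]

lemma neg_one_pow_mod (m : ℕ) : ((-1:F)^m) = (-1)^(m % 2) := by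
  conv_lhs => rw [← Nat.div_add_mod m 2]
  rw [pow_add, pow_mul, neg_one_sq, one_pow, one_mul]

lemma neg_one_pow_congr {m n : ℕ} (h : (m : ZMod 2) = (n : ZMod 2)) :
    ((-1:F)^m) = (-1)^n := by
  have h' : m % 2 = n % 2 := (ZMod.natCast_eq_natCast_iff m n 2).1 h
  rw [neg_one_pow_mod, neg_one_pow_mod (F := F) n, h']

/-- number of pairs of positions `q.1 < q.2` carrying odd entries -/
def p2c (p : β → Fin 3) {d : ℕ} (k : Fin d → β) : ℕ :=
  (Finset.univ.filter fun q : Fin d × Fin d =>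
    q.1 < q.2 ∧ p (k q.1) = 2 ∧ p (k q.2) = 2).card

/-- the transpose-type linear map on the coordinate tensor power -/
def Jmap (F : Type) [Field F] (p : β → Fin 3) (τ : β → β) (d : ℕ) :
    TPow F β d →ₗ[F] TPow F β d :=
  Finsupp.lsum F fun k => LinearMap.toSpanSingleton F _
    (((-1 : F) ^ p2c p k) • Finsupp.single (τ ∘ k) (1 : F))

lemma Jmap_single (p : β → Fin 3) (τ : β → β) {d : ℕ} (k : Fin d → β) (c : F) :
    Jmap F p τ d (Finsupp.single k c)
      = (c * (-1 : F) ^ p2c p k) • Finsupp.single (τ ∘ k) (1 : F) := by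
  simp [Jmap, smul_smul]

lemma p2c_comp (p : β → Fin 3) (τ : β → β) (hp : ∀ x, p (τ x) = p x) {d : ℕ}
    (k : Fin d → β) : p2c p (τ ∘ k) = p2c p k := by
  unfold p2c
  congr 1
  apply Finset.filter_congr
  intro q _
  simp [hp]

lemma Jmap_Jmap (p : β → Fin 3) (τ : β → β) (hp : ∀ x, p (τ x) = p x)
    (hτ : ∀ x, τ (τ x) = x) {d : ℕ} (v : TPow F β d) :
    Jmap F p τ d (Jmap F p τ d v) = v := by
  induction v using Finsupp.induction_linear with
  | zero => simp
  | add f g hf hg => simp [hf, hg]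
  | single k c =>
      rw [Jmap_single, map_smul, Jmap_single, p2c_comp p τ hp]
      have : (τ ∘ τ ∘ k) = k := by funext i; exact hτ (k i)
      rw [this, smul_smul]
      rw [one_mul, mul_assoc, ← pow_add, ← two_mul, pow_mul, neg_one_sq, one_pow,
        mul_one, Finsupp.smul_single, smul_eq_mul, mul_one]


lemma card_filter_zmod {γ : Type} [Fintype γ] (P : γ → Prop) [DecidablePred P] :
    (((Finset.univ.filter P).card : ℕ) : ZMod 2)
      = ∑ x : γ, if P x then (1 : ZMod 2) else 0 := by
  rw [Finset.card_filter]
  rw [Nat.cast_sum]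
  congr 1
  funext x
  split_ifs <;> simp

lemma ite_and_one {c1 : Prop} [Decidable c1] (x y : Fin 3) :
    (if c1 ∧ x = 2 ∧ y = 2 then (1 : ZMod 2) else 0)
      = (if c1 then (1 : ZMod 2) else 0) * par2 x * par2 y := by
  unfold par2; split_ifs <;> simp_all

lemma sign_key (p : β → Fin 3) {d : ℕ} (a k m : Fin d → β)
    (hM : ∀ i, par2 (p (m i)) = par2 (p (a i)) + par2 (p (k i))) :
    ((koszul p p a k + p2c p m : ℕ) : ZMod 2)
      = ((p2c p a + p2c p k + koszul p p k a : ℕ) : ZMod 2) := by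
  have hswap : ∀ f : Fin d × Fin d → ZMod 2,
      (∑ q : Fin d × Fin d, f q) = ∑ q : Fin d × Fin d, f (q.2, q.1) :=
    fun f => Fintype.sum_equiv (Equiv.prodComm _ _) _ _ (fun q => rfl)
  unfold koszul p2c
  rw [Nat.cast_add, Nat.cast_add, Nat.cast_add, card_filter_zmod, card_filter_zmod,
    card_filter_zmod, card_filter_zmod, card_filter_zmod]
  simp only [ite_and_one]
  rw [hswap (fun q => (if q.1 < q.2 then (1:ZMod 2) else 0) * par2 (p (m q.1)) * par2 (p (m q.2))),
    hswap (fun q => (if q.1 < q.2 then (1:ZMod 2) else 0) * par2 (p (a q.1)) * par2 (p (a q.2))),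
    hswap (fun q => (if q.1 < q.2 then (1:ZMod 2) else 0) * par2 (p (k q.1)) * par2 (p (k q.2)))]
  rw [← Finset.sum_add_distrib, ← Finset.sum_add_distrib, ← Finset.sum_add_distrib]
  apply Finset.sum_congr rfl
  intro q _
  by_cases h : q.2 < q.1
  · simp only [h, if_true, one_mul]
    rw [hM q.1, hM q.2]
    generalize par2 (p (a q.1)) = A1
    generalize par2 (p (a q.2)) = A2
    generalize par2 (p (k q.1)) = K1
    generalize par2 (p (k q.2)) = K2
    revert A1 A2 K1 K2; decide
  · simp [h]

def invc (p : β → Fin 3) (o : β → ℕ) {d : ℕ} (b : Fin d → β) : ℕ :=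
  (Finset.univ.filter fun q : Fin d × Fin d =>
    q.1 < q.2 ∧ p (b q.1) = 2 ∧ p (b q.2) = 2 ∧ o (b q.2) < o (b q.1)).card

def fsym (p : β → Fin 3) (o o' : β → ℕ) {d : ℕ} (b : Fin d → β) (i j : Fin d) : ZMod 2 :=
  (if p (b i) = 2 ∧ p (b j) = 2 ∧ o (b j) < o (b i) then 1 else 0)
  + (if p (b i) = 2 ∧ p (b j) = 2 ∧ o' (b j) < o' (b i) then 1 else 0)
  + (if p (b i) = 2 ∧ p (b j) = 2 then 1 else 0)

lemma fsym_symm (p : β → Fin 3) (o o' : β → ℕ)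
    (ho : ∀ x y, p x = 2 → p y = 2 → x ≠ y → o x ≠ o y)
    (ho' : ∀ x y, p x = 2 → p y = 2 → x ≠ y → o' x ≠ o' y)
    {d : ℕ} (b : Fin d → β)
    (hb : ∀ i j : Fin d, i ≠ j → b i = b j → p (b i) ≠ 2)
    (i j : Fin d) (hij : i ≠ j) :
    fsym p o o' b i j = fsym p o o' b j i := by
  unfold fsym
  by_cases hpi : p (b i) = 2
  · by_cases hpj : p (b j) = 2
    · have hne : b i ≠ b j := fun h => hb i j hij h hpi
      rcases lt_or_gt_of_ne (ho _ _ hpi hpj hne) with h1 | h1 <;>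
        rcases lt_or_gt_of_ne (ho' _ _ hpi hpj hne) with h2 | h2 <;>
          simp [hpi, hpj, h1, h2, asymm h1, asymm h2] <;> decide
    · simp [hpj]
  · simp [hpi]

lemma sum_expand (p : β → Fin 3) (o o' : β → ℕ) {d : ℕ} (c : Fin d → β) :
    ((invc p o c + invc p o' c + p2c p c : ℕ) : ZMod 2)
      = ∑ q ∈ Finset.univ.filter (fun q : Fin d × Fin d => q.1 < q.2),
          fsym p o o' c q.1 q.2 := by
  unfold invc p2c fsym
  rw [Nat.cast_add, Nat.cast_add, card_filter_zmod, card_filter_zmod, card_filter_zmod]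
  rw [Finset.sum_add_distrib, Finset.sum_add_distrib]
  congr 1
  · congr 1
    · rw [Finset.sum_filter]
      apply Finset.sum_congr rfl
      intro q _
      by_cases h : q.1 < q.2 <;> simp [h]
    · rw [Finset.sum_filter]
      apply Finset.sum_congr rfl
      intro q _
      by_cases h : q.1 < q.2 <;> simp [h]
  · rw [Finset.sum_filter]
    apply Finset.sum_congr rfl
    intro q _
    by_cases h : q.1 < q.2 <;> simp [h]

lemma const_key (p : β → Fin 3) (o o' : β → ℕ)
    (ho : ∀ x y, p x = 2 → p y = 2 → x ≠ y → o x ≠ o y)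
    (ho' : ∀ x y, p x = 2 → p y = 2 → x ≠ y → o' x ≠ o' y)
    {d : ℕ} (b : Fin d → β)
    (hb : ∀ i j : Fin d, i ≠ j → b i = b j → p (b i) ≠ 2)
    (σ : Equiv.Perm (Fin d)) :
    ((invc p o (b ∘ σ) + invc p o' (b ∘ σ) + p2c p (b ∘ σ) : ℕ) : ZMod 2)
      = ((invc p o b + invc p o' b + p2c p b : ℕ) : ZMod 2) := by
  rw [sum_expand, sum_expand]
  have hfc : ∀ q : Fin d × Fin d, fsym p o o' (b ∘ σ) q.1 q.2 = fsym p o o' b (σ q.1) (σ q.2) :=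
    fun q => rfl
  have hsymm := fsym_symm p o o' ho ho' b hb
  apply Finset.sum_bij' (i := fun (q : Fin d × Fin d) (_ : q ∈ _) =>
      if σ q.1 < σ q.2 then (σ q.1, σ q.2) else (σ q.2, σ q.1))
    (j := fun (q : Fin d × Fin d) (_ : q ∈ _) =>
      if σ⁻¹ q.1 < σ⁻¹ q.2 then (σ⁻¹ q.1, σ⁻¹ q.2) else (σ⁻¹ q.2, σ⁻¹ q.1))
  · intro q hq
    simp only [Finset.mem_filter, Finset.mem_univ, true_and] at hq ⊢
    have hne : σ q.1 ≠ σ q.2 := fun h => absurd (σ.injective h) (ne_of_lt hq)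
    split_ifs with h
    · exact h
    · exact lt_of_le_of_ne (not_lt.1 h) (Ne.symm hne)
  · intro q hq
    simp only [Finset.mem_filter, Finset.mem_univ, true_and] at hq ⊢
    have hne : σ⁻¹ q.1 ≠ σ⁻¹ q.2 := fun h => absurd (σ⁻¹.injective h) (ne_of_lt hq)
    split_ifs with h
    · exact h
    · exact lt_of_le_of_ne (not_lt.1 h) (Ne.symm hne)
  · intro q hq
    simp only [Finset.mem_filter, Finset.mem_univ, true_and] at hq
    by_cases h : σ q.1 < σ q.2
    · simp [h, hq]
    · simp [h, not_lt_of_gt hq]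
  · intro q hq
    simp only [Finset.mem_filter, Finset.mem_univ, true_and] at hq
    by_cases h : σ⁻¹ q.1 < σ⁻¹ q.2
    · rw [Equiv.Perm.inv_def] at h; simp [h, hq]
    · rw [Equiv.Perm.inv_def] at h; simp [h, not_lt_of_gt hq]
  · intro q hq
    simp only [Finset.mem_filter, Finset.mem_univ, true_and] at hq
    rw [hfc]
    split_ifs with h
    · rfl
    · exact hsymm _ _ (fun hh => absurd (σ.injective hh) (ne_of_lt hq))


lemma tensorOf_single {d : ℕ} (m : Fin d → β) :
    tensorOf F (fun i => Finsupp.single (m i) (1:F)) = Finsupp.single m (1:F) := by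
  unfold tensorOf
  have hs : (Fintype.piFinset fun i => (Finsupp.single (m i) (1:F)).support) = {m} := by
    ext k
    simp only [Fintype.mem_piFinset, Finsupp.support_single_ne_zero _ (one_ne_zero),
      Finset.mem_singleton]
    constructor
    · intro h; funext i; exact h i
    · intro h i; rw [h]
  rw [hs, Finset.sum_singleton]
  simp

lemma tensorOf_eq_zero {d : ℕ} (v : Fin d → (β →₀ F)) (i0 : Fin d) (h : v i0 = 0) :
    tensorOf F v = 0 := by
  unfold tensorOf
  apply Finset.sum_eq_zero
  intro k _
  rw [Finset.prod_eq_zero (Finset.mem_univ i0) (by simp [h]), zero_smul]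

end S5aux

noncomputable section S5zig

set_option linter.unusedSectionVars false

open Finsupp

variable {F : Type} [Field F] {ℓ : ℕ}

def tauZ : ZB ℓ → ZB ℓ
  | Sum.inl i => Sum.inl i
  | Sum.inr (Sum.inl j) => Sum.inr (Sum.inr (Sum.inl j))
  | Sum.inr (Sum.inr (Sum.inl j)) => Sum.inr (Sum.inl j)
  | Sum.inr (Sum.inr (Sum.inr j)) => Sum.inr (Sum.inr (Sum.inr j))

lemma tauZ_tauZ (x : ZB ℓ) : tauZ (tauZ x) = x := by
  rcases x with i | j | j | j <;> rfl

lemma pZ_tauZ (x : ZB ℓ) : pZ (tauZ x) = pZ x := by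
  rcases x with i | j | j | j <;> rfl

@[simp] lemma pZ_e (i : Fin (ℓ+1)) : pZ (Sum.inl i : ZB ℓ) = 0 := rfl
@[simp] lemma pZ_d (j : Fin ℓ) : pZ (Sum.inr (Sum.inl j) : ZB ℓ) = 2 := rfl
@[simp] lemma pZ_u (j : Fin ℓ) : pZ (Sum.inr (Sum.inr (Sum.inl j)) : ZB ℓ) = 2 := rfl
@[simp] lemma pZ_c (j : Fin ℓ) : pZ (Sum.inr (Sum.inr (Sum.inr j)) : ZB ℓ) = 1 := rfl

lemma ordZ_inj_odd (x y : ZB ℓ) (hx : pZ x = 2) (hy : pZ y = 2) (hne : x ≠ y) :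
    ordZ x ≠ ordZ y := by
  intro h
  rcases x with i | j | j | j <;> rcases y with i' | j' | j' | j' <;>
    first
      | (refine absurd hx ?_; simp; done)
      | (refine absurd hy ?_; simp; done)
      | (simp only [ordZ] at h
         have h1 := j.isLt
         have h2 := j'.isLt
         first
           | omega
           | (exact hne (by rw [show j = j' from Fin.ext (by omega)])))

lemma mulZ_struct (x y : ZB ℓ) :
    mulZ F x y = 0 ∨ ∃ z, mulZ F x y = Finsupp.single z (1:F) ∧
      par2 (pZ z) = par2 (pZ x) + par2 (pZ y) := by
  rcases x with i | j | j | j <;> rcases y with i' | j' | j' | j' <;>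
    simp only [mulZ] <;> split_ifs <;>
    first
      | exact Or.inl rfl
      | (refine Or.inr ⟨_, rfl, ?_⟩
         simp [cZ, par2]
         first | rfl | decide | done)

lemma mulZ_antihom (x y : ZB ℓ) :
    mulZ F (tauZ y) (tauZ x) = Finsupp.mapDomain tauZ (mulZ F x y) := by
  rcases x with i | j | j | j <;> rcases y with i' | j' | j' | j' <;>
    simp only [mulZ, tauZ, srcZ, tgtZ] <;> split_ifs <;>
    first
      | rfl
      | (simp_all [Finsupp.mapDomain_single, Finsupp.mapDomain_zero, tauZ, cZ,
          Fin.castSucc_inj, Fin.succ_inj, eq_comm]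
         done)
      | (simp only [Fin.castSucc_inj] at *; subst_vars; split_ifs <;> simp [Finsupp.mapDomain_single, tauZ, cZ]; done)
      | (exfalso; simp_all [Fin.ext_iff, Finsupp.mapDomain_single]; omega)

end S5zig

noncomputable section S5int

set_option linter.unusedSectionVars false

open Finsupp

variable {F : Type} [Field F]
variable {β : Type} [Fintype β] [DecidableEq β]

lemma kact_single_single (pA pV : β → Fin 3) (act : β → β → (β →₀ F)) {d : ℕ}
    (a k : Fin d → β) :
    kact F pA pV act (Finsupp.single a (1:F)) (Finsupp.single k (1:F))
      = ((-1:F) ^ koszul pA pV a k) • tensorOf F (fun i => act (a i) (k i)) := by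
  unfold kact
  rw [Finsupp.lsum_single, LinearMap.toSpanSingleton_apply, one_smul,
    Finsupp.sum_single_index (by simp), one_mul]

lemma rkact_single_single (pA pV : β → Fin 3) (ract : β → β → (β →₀ F)) {d : ℕ}
    (a k : Fin d → β) :
    rkact F pA pV ract (Finsupp.single a (1:F)) (Finsupp.single k (1:F))
      = ((-1:F) ^ koszul pV pA k a) • tensorOf F (fun i => ract (k i) (a i)) := by
  unfold rkact
  rw [Finsupp.lsum_single, LinearMap.toSpanSingleton_apply, one_smul,
    Finsupp.sum_single_index (by simp), one_mul]

lemma kact_zero_left (pA pV : β → Fin 3) (act : β → β → (β →₀ F)) {d : ℕ}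
    (v : TPow F β d) : kact F pA pV act 0 v = 0 := by
  unfold kact
  induction v using Finsupp.induction_linear with
  | zero => simp
  | add f g hf hg => rw [map_add, hf, hg, add_zero]
  | single k c => rw [Finsupp.lsum_single, LinearMap.toSpanSingleton_apply,
      Finsupp.sum_zero_index, smul_zero]

lemma kact_add_left (pA pV : β → Fin 3) (act : β → β → (β →₀ F)) {d : ℕ}
    (x y : TPow F β d) (v : TPow F β d) :
    kact F pA pV act (x + y) v = kact F pA pV act x v + kact F pA pV act y v := by
  unfold kact
  induction v using Finsupp.induction_linear with
  | zero => simp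
  | add f g hf hg =>
      rw [map_add, map_add, map_add, hf, hg]
      abel
  | single k c =>
      rw [Finsupp.lsum_single, Finsupp.lsum_single, Finsupp.lsum_single,
        LinearMap.toSpanSingleton_apply, LinearMap.toSpanSingleton_apply,
        LinearMap.toSpanSingleton_apply,
        Finsupp.sum_add_index' (by intro a; simp) (by intro a r1 r2; rw [add_mul, add_smul]),
        smul_add]

lemma kact_smul_left (pA pV : β → Fin 3) (act : β → β → (β →₀ F)) {d : ℕ}
    (c : F) (x : TPow F β d) (v : TPow F β d) :
    kact F pA pV act (c • x) v = c • kact F pA pV act x v := by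
  unfold kact
  induction v using Finsupp.induction_linear with
  | zero => simp
  | add f g hf hg => rw [map_add, map_add, hf, hg, smul_add]
  | single k c' =>
      rw [Finsupp.lsum_single, Finsupp.lsum_single, LinearMap.toSpanSingleton_apply,
        LinearMap.toSpanSingleton_apply, Finsupp.sum_smul_index (by intro a; simp)]
      have hs : (Finsupp.sum x fun a r => (c * r * (-1:F) ^ koszul pA pV a k) •
            tensorOf F fun i => act (a i) (k i))
          = c • Finsupp.sum x fun a r => (r * (-1:F) ^ koszul pA pV a k) •
            tensorOf F fun i => act (a i) (k i) := by
        rw [Finsupp.smul_sum]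
        apply Finsupp.sum_congr
        intro a _
        rw [smul_smul, mul_assoc]
      rw [hs, smul_comm]

lemma rkact_zero_left (pA pV : β → Fin 3) (ract : β → β → (β →₀ F)) {d : ℕ}
    (v : TPow F β d) : rkact F pA pV ract 0 v = 0 := by
  unfold rkact
  induction v using Finsupp.induction_linear with
  | zero => simp
  | add f g hf hg => rw [map_add, hf, hg, add_zero]
  | single k c => rw [Finsupp.lsum_single, LinearMap.toSpanSingleton_apply,
      Finsupp.sum_zero_index, smul_zero]

lemma rkact_add_left (pA pV : β → Fin 3) (ract : β → β → (β →₀ F)) {d : ℕ}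
    (x y : TPow F β d) (v : TPow F β d) :
    rkact F pA pV ract (x + y) v = rkact F pA pV ract x v + rkact F pA pV ract y v := by
  unfold rkact
  induction v using Finsupp.induction_linear with
  | zero => simp
  | add f g hf hg =>
      rw [map_add, map_add, map_add, hf, hg]
      abel
  | single k c =>
      rw [Finsupp.lsum_single, Finsupp.lsum_single, Finsupp.lsum_single,
        LinearMap.toSpanSingleton_apply, LinearMap.toSpanSingleton_apply,
        LinearMap.toSpanSingleton_apply,
        Finsupp.sum_add_index' (by intro a; simp) (by intro a r1 r2; rw [add_mul, add_smul]),
        smul_add]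

lemma rkact_smul_left (pA pV : β → Fin 3) (ract : β → β → (β →₀ F)) {d : ℕ}
    (c : F) (x : TPow F β d) (v : TPow F β d) :
    rkact F pA pV ract (c • x) v = c • rkact F pA pV ract x v := by
  unfold rkact
  induction v using Finsupp.induction_linear with
  | zero => simp
  | add f g hf hg => rw [map_add, map_add, hf, hg, smul_add]
  | single k c' =>
      rw [Finsupp.lsum_single, Finsupp.lsum_single, LinearMap.toSpanSingleton_apply,
        LinearMap.toSpanSingleton_apply, Finsupp.sum_smul_index (by intro a; simp)]
      have hs : (Finsupp.sum x fun a r => (c * r * (-1:F) ^ koszul pV pA k a) •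
            tensorOf F fun i => ract (k i) (a i))
          = c • Finsupp.sum x fun a r => (r * (-1:F) ^ koszul pV pA k a) •
            tensorOf F fun i => ract (k i) (a i) := by
        rw [Finsupp.smul_sum]
        apply Finsupp.sum_congr
        intro a _
        rw [smul_smul, mul_assoc]
      rw [hs, smul_comm]

lemma koszul_tau (p : β → Fin 3) (τ : β → β) (hp : ∀ x, p (τ x) = p x) {d : ℕ}
    (a k : Fin d → β) :
    koszul p p (τ ∘ k) (τ ∘ a) = koszul p p k a := by
  unfold koszul
  congr 1
  apply Finset.filter_congr
  intro q _
  simp [hp]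

lemma J_core (p : β → Fin 3) (τ : β → β) (hp : ∀ x, p (τ x) = p x)
    (mul : β → β → (β →₀ F))
    (hanti : ∀ x y, mul (τ y) (τ x) = Finsupp.mapDomain τ (mul x y))
    (hstruct : ∀ x y, mul x y = 0 ∨ ∃ z, mul x y = Finsupp.single z (1:F) ∧
        par2 (p z) = par2 (p x) + par2 (p y))
    {d : ℕ} (a k : Fin d → β) :
    Jmap F p τ d (kact F p p mul (Finsupp.single a (1:F)) (Finsupp.single k (1:F)))
      = rkact F p p (fun b a' => mul b a') (Jmap F p τ d (Finsupp.single a (1:F)))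
          (Jmap F p τ d (Finsupp.single k (1:F))) := by
  rw [kact_single_single, Jmap_single, Jmap_single, one_mul, one_mul,
    rkact_smul_left, map_smul, map_smul, rkact_single_single]
  by_cases hz : ∃ i, mul (a i) (k i) = 0
  · obtain ⟨i0, hi0⟩ := hz
    rw [tensorOf_eq_zero _ i0 hi0]
    have h2 : mul ((τ ∘ k) i0) ((τ ∘ a) i0) = 0 := by
      show mul (τ (k i0)) (τ (a i0)) = 0
      rw [hanti, hi0, Finsupp.mapDomain_zero]
    rw [tensorOf_eq_zero _ i0 h2]
    simp
  · push_neg at hz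
    have hm : ∀ i, ∃ z, mul (a i) (k i) = Finsupp.single z 1 ∧
        par2 (p z) = par2 (p (a i)) + par2 (p (k i)) :=
      fun i => (hstruct (a i) (k i)).resolve_left (hz i)
    choose m hm1 hm2 using hm
    have hL : (fun i => mul (a i) (k i)) = fun i => Finsupp.single (m i) (1:F) :=
      funext fun i => hm1 i
    have hR : (fun i => mul ((τ ∘ k) i) ((τ ∘ a) i))
        = fun i => Finsupp.single ((τ ∘ m) i) (1:F) := by
      funext i
      show mul (τ (k i)) (τ (a i)) = _
      rw [hanti, hm1 i, Finsupp.mapDomain_single]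
      rfl
    rw [hL, hR, tensorOf_single, tensorOf_single, Jmap_single, one_mul,
      koszul_tau p τ hp]
    simp only [smul_smul]
    congr 1
    rw [← pow_add, ← pow_add, ← pow_add]
    apply neg_one_pow_congr
    have := sign_key p a k m hm2
    push_cast at this ⊢
    linear_combination this

theorem J_intertwine (p : β → Fin 3) (τ : β → β) (hp : ∀ x, p (τ x) = p x)
    (mul : β → β → (β →₀ F))
    (hanti : ∀ x y, mul (τ y) (τ x) = Finsupp.mapDomain τ (mul x y))
    (hstruct : ∀ x y, mul x y = 0 ∨ ∃ z, mul x y = Finsupp.single z (1:F) ∧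
        par2 (p z) = par2 (p x) + par2 (p y))
    {d : ℕ} (x v : TPow F β d) :
    Jmap F p τ d (kact F p p mul x v)
      = rkact F p p (fun b a' => mul b a') (Jmap F p τ d x) (Jmap F p τ d v) := by
  induction x using Finsupp.induction_linear with
  | zero => rw [kact_zero_left, map_zero, rkact_zero_left]
  | add f g hf hg => rw [kact_add_left, map_add, map_add, hf, hg, rkact_add_left]
  | single a c =>
      induction v using Finsupp.induction_linear with
      | zero => simp
      | add f g hf hg => rw [map_add, map_add, hf, hg, map_add, map_add]
      | single k c' =>
          have hx : Finsupp.single a c = c • Finsupp.single a (1:F) := by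
            rw [Finsupp.smul_single, smul_eq_mul, mul_one]
          have hv : Finsupp.single k c' = c' • Finsupp.single k (1:F) := by
            rw [Finsupp.smul_single, smul_eq_mul, mul_one]
          rw [hx, hv, kact_smul_left, map_smul, map_smul, map_smul, map_smul, map_smul,
            rkact_smul_left, map_smul, J_core p τ hp mul hanti hstruct]

lemma zmod2_cancel (a b c a' b' c' : ZMod 2) (h : a' + b' + c' = a + b + c) :
    a + a' + c' = c + (b + b') := by revert a b c a' b' c'; decide

end S5int

noncomputable section S5orb

set_option linter.unusedSectionVars false

open Finsupp

variable {F : Type} [Field F]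
variable {β : Type} [Fintype β] [DecidableEq β]
variable (p : β → Fin 3) (o : β → ℕ) (τ : β → β)

lemma stdFam_vec (x : β) : (stdFam F p o).vec x = Finsupp.single x (1:F) := rfl

lemma stdFam_inv {d : ℕ} (b : Fin d → β) :
    (stdFam F p o).inversions b = invc p o b := rfl

lemma invc_tau (hp : ∀ x, p (τ x) = p x) {d : ℕ} (b : Fin d → β) :
    invc p o (τ ∘ b) = invc p (o ∘ τ) b := by
  unfold invc
  congr 1
  apply Finset.filter_congr
  intro q _
  simp [hp, Function.comp]

omit [Fintype β] [DecidableEq β] in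
lemma mem_orbit_iff' (Fm : CalFamily F β) {d : ℕ} (b b' : Fin d → Fm.ι) :
    b' ∈ Fm.orbit b ↔ ∃ σ : Equiv.Perm (Fin d), b' = b ∘ σ := by
  simp [CalFamily.orbit]

omit [Fintype β] [DecidableEq β] in
lemma mem_part_one_iff' (Fm : CalFamily F β) (c : Fm.ι) :
    c ∈ Finset.univ.filter (fun c : Fm.ι => Fm.part c = 1) ↔ Fm.part c = 1 := by
  simp

lemma orbit_tau {d : ℕ} (b : Fin d → β) :
    (stdFam F p o).orbit (τ ∘ b)
      = ((stdFam F p o).orbit b).image (fun b' => τ ∘ b') := by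
  ext c
  simp only [CalFamily.orbit, Finset.mem_filter, Finset.mem_univ, true_and,
    Finset.mem_image]
  constructor
  · rintro ⟨σ, rfl⟩
    exact Finset.mem_image.2 ⟨b ∘ σ, (mem_orbit_iff' (stdFam F p o) b _).2 ⟨σ, rfl⟩, rfl⟩
  · intro hc
    obtain ⟨b', hb', rfl⟩ := Finset.mem_image.1 hc
    obtain ⟨σ, rfl⟩ := (mem_orbit_iff' (stdFam F p o) b b').1 hb'
    exact ⟨σ, rfl⟩

lemma J_x (hp : ∀ x, p (τ x) = p x) (hτ : ∀ x, τ (τ x) = x)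
    (ho : ∀ x y, p x = 2 → p y = 2 → x ≠ y → o x ≠ o y)
    (ho' : ∀ x y, p x = 2 → p y = 2 → x ≠ y → o (τ x) ≠ o (τ y))
    {d : ℕ} (b : Fin d → β) (hb : (stdFam F p o).IsSeq b) :
    Jmap F p τ d ((stdFam F p o).x b)
      = ((-1:F) ^ p2c p b) • (stdFam F p o).x (τ ∘ b) := by
  have hτinj : Function.Injective τ := Function.LeftInverse.injective hτ
  unfold CalFamily.x
  have himg : ∀ x ∈ (stdFam F p o).orbit b, ∀ y ∈ (stdFam F p o).orbit b,
      τ ∘ x = τ ∘ y → x = y := by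
    intro x _ y _ h
    funext i
    exact hτinj (congrFun h i)
  rw [map_sum, orbit_tau]
  have himage : (∑ b' ∈ Finset.image (fun b' => τ ∘ b') ((stdFam F p o).orbit b),
      ((-1:F) ^ ((stdFam F p o).inversions (τ ∘ b) + (stdFam F p o).inversions b')) •
        tensorOf F fun i => (stdFam F p o).vec (b' i))
      = ∑ b' ∈ (stdFam F p o).orbit b,
      ((-1:F) ^ ((stdFam F p o).inversions (τ ∘ b) + (stdFam F p o).inversions (τ ∘ b'))) •
        tensorOf F fun i => (stdFam F p o).vec ((τ ∘ b') i) := Finset.sum_image himg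
  refine Eq.trans ?_ (congrArg (fun t => ((-1:F) ^ p2c p b) • t) himage.symm)
  beta_reduce
  rw [Finset.smul_sum]
  apply Finset.sum_congr rfl
  intro b' hb'
  have hσ : ∃ σ : Equiv.Perm (Fin d), b' = b ∘ σ := by
    simp only [CalFamily.orbit, Finset.mem_filter, Finset.mem_univ, true_and] at hb'
    exact hb'
  obtain ⟨σ, rfl⟩ := hσ
  simp only [stdFam_vec]
  rw [map_smul, tensorOf_single, tensorOf_single, Jmap_single, one_mul,
    smul_smul, smul_smul]
  congr 1
  rw [← pow_add, ← pow_add]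
  apply neg_one_pow_congr
  simp only [stdFam_inv]
  erw [stdFam_inv, stdFam_inv]
  erw [invc_tau p o τ hp, invc_tau p o τ hp]
  have hc := const_key p o (o ∘ τ) ho ho' b hb σ
  push_cast at hc ⊢
  exact zmod2_cancel _ _ _ _ _ _ hc

lemma mfac_tau (hp : ∀ x, p (τ x) = p x) (hτ : ∀ x, τ (τ x) = x)
    {d : ℕ} (b : Fin d → β) :
    (stdFam F p o).mfac (τ ∘ b) = (stdFam F p o).mfac b := by
  unfold CalFamily.mfac
  apply Finset.prod_bij' (i := fun c (_ : c ∈ _) => τ c) (j := fun c (_ : c ∈ _) => τ c)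
  · intro c hc
    exact (mem_part_one_iff' (stdFam F p o) (τ c)).2
      ((hp c).trans ((mem_part_one_iff' (stdFam F p o) c).1 hc))
  · intro c hc
    exact (mem_part_one_iff' (stdFam F p o) (τ c)).2
      ((hp c).trans ((mem_part_one_iff' (stdFam F p o) c).1 hc))
  · intro c _; exact hτ c
  · intro c _; exact hτ c
  · intro c _
    have he : Finset.filter (fun i => (τ ∘ b) i = c) Finset.univ
        = Finset.filter (fun i : Fin d => b i = τ c) Finset.univ := by
      apply Finset.filter_congr
      intro i _
      simp only [Function.comp]
      constructor
      · intro h; rw [← h, hτ]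
      · intro h; rw [h, hτ]
    show (Finset.filter (fun i => (τ ∘ b) i = c) Finset.univ).card.factorial = _
    rw [he]
    rfl

lemma IsSeq_tau (hp : ∀ x, p (τ x) = p x) (hτ : ∀ x, τ (τ x) = x)
    {d : ℕ} (b : Fin d → β) (hb : (stdFam F p o).IsSeq b) :
    (stdFam F p o).IsSeq (τ ∘ b) := by
  have hτinj : Function.Injective τ := Function.LeftInverse.injective hτ
  intro i j hij heq
  have hbij : b i = b j := hτinj heq
  have := hb i j hij hbij
  show p (τ (b i)) ≠ 2
  rw [hp]
  exact this

lemma J_y (hp : ∀ x, p (τ x) = p x) (hτ : ∀ x, τ (τ x) = x)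
    (ho : ∀ x y, p x = 2 → p y = 2 → x ≠ y → o x ≠ o y)
    (ho' : ∀ x y, p x = 2 → p y = 2 → x ≠ y → o (τ x) ≠ o (τ y))
    {d : ℕ} (b : Fin d → β) (hb : (stdFam F p o).IsSeq b) :
    Jmap F p τ d ((stdFam F p o).y b)
      = ((-1:F) ^ p2c p b) • (stdFam F p o).y (τ ∘ b) := by
  unfold CalFamily.y
  rw [map_nsmul, J_x p o τ hp hτ ho ho' b hb, mfac_tau p o τ hp hτ, smul_comm]

lemma J_gammaTilde (hp : ∀ x, p (τ x) = p x) (hτ : ∀ x, τ (τ x) = x)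
    (ho : ∀ x y, p x = 2 → p y = 2 → x ≠ y → o x ≠ o y)
    (ho' : ∀ x y, p x = 2 → p y = 2 → x ≠ y → o (τ x) ≠ o (τ y))
    {d : ℕ} (x : TPow F β d) (hx : x ∈ gammaTilde F (stdFam F p o) d) :
    Jmap F p τ d x ∈ gammaTilde F (stdFam F p o) d := by
  have hmem : Jmap F p τ d x ∈ Submodule.map (Jmap F p τ d)
      (gammaTilde F (stdFam F p o) d) := Submodule.mem_map_of_mem hx
  unfold gammaTilde at hmem ⊢
  rw [Submodule.map_span] at hmem
  refine Submodule.span_le.2 ?_ hmem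
  rintro w ⟨w', ⟨b, hbseq, rfl⟩, rfl⟩
  rw [J_y p o τ hp hτ ho ho' b hbseq]
  exact Submodule.smul_mem _ _ (Submodule.subset_span
    ⟨τ ∘ b, IsSeq_tau p o τ hp hτ b hbseq, rfl⟩)

lemma map_inv_sInf {M : Type} [AddCommGroup M] [Module F M]
    (J : M →ₗ[F] M) (hinv : ∀ v, J (J v) = v) (s : Set (Submodule F M)) :
    Submodule.map J (sInf s) = sInf ((fun N => Submodule.map J N) '' s) := by
  apply le_antisymm
  · apply le_sInf
    rintro _ ⟨N, hN, rfl⟩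
    exact Submodule.map_mono (sInf_le hN)
  · intro x hx
    rw [Submodule.mem_map]
    refine ⟨J x, ?_, hinv x⟩
    rw [Submodule.mem_sInf]
    intro N hN
    obtain ⟨y, hy, hxy⟩ := Submodule.mem_sInf.1 hx _ (Set.mem_image_of_mem _ hN)
    have hxy' : J x = y := by rw [← hxy, hinv]
    rw [hxy']
    exact hy

lemma map_inv_inf {M : Type} [AddCommGroup M] [Module F M]
    (J : M →ₗ[F] M) (hinv : ∀ v, J (J v) = v) (A B : Submodule F M) :
    Submodule.map J (A ⊓ B) = Submodule.map J A ⊓ Submodule.map J B := by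
  apply le_antisymm
  · exact le_inf (Submodule.map_mono inf_le_left) (Submodule.map_mono inf_le_right)
  · intro x hx
    obtain ⟨hx1, hx2⟩ := Submodule.mem_inf.1 hx
    obtain ⟨a, ha, rfl⟩ := hx1
    obtain ⟨b, hb, hba⟩ := hx2
    have hab : b = a := by rw [← hinv a, ← hinv b, hba]
    exact ⟨a, Submodule.mem_inf.2 ⟨ha, hab ▸ hb⟩, rfl⟩

lemma map_inv_inv {M : Type} [AddCommGroup M] [Module F M]
    (J : M →ₗ[F] M) (hinv : ∀ v, J (J v) = v) (N : Submodule F M) :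
    Submodule.map J (Submodule.map J N) = N := by
  rw [← Submodule.map_comp, show J ∘ₗ J = LinearMap.id from LinearMap.ext hinv,
    Submodule.map_id]

end S5orb

noncomputable section S5fin

set_option linter.unusedSectionVars false

open Finsupp

variable {F : Type} [Field F] {ℓ n d : ℕ}

def tauM : (ZB ℓ × Fin n × Fin n) → (ZB ℓ × Fin n × Fin n) :=
  fun m => (tauZ m.1, m.2.2, m.2.1)

lemma tauM_tauM (x : ZB ℓ × Fin n × Fin n) : tauM (tauM x) = x := by
  obtain ⟨a, r, s⟩ := x
  simp [tauM, tauZ_tauZ]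

lemma pM_tauM (x : ZB ℓ × Fin n × Fin n) :
    (zigData F ℓ).pM n (tauM x) = (zigData F ℓ).pM n x := pZ_tauZ x.1

lemma tauM_inj : Function.Injective (tauM : ZB ℓ × Fin n × Fin n → _) :=
  Function.LeftInverse.injective tauM_tauM

lemma enc1 {a b : ℕ} {r r' : Fin n} (h : a * n + (r:ℕ) = b * n + (r':ℕ)) :
    a = b ∧ r = r' := by
  have hn : 0 < n := r.pos
  have hr := r.isLt
  have hr' := r'.isLt
  have h1 : (r:ℕ) = (r':ℕ) := by
    have e1 : (a * n + (r:ℕ)) % n = (r:ℕ) % n := by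
      rw [add_comm, Nat.add_mul_mod_self_right]
    have e2 : (b * n + (r':ℕ)) % n = (r':ℕ) % n := by
      rw [add_comm, Nat.add_mul_mod_self_right]
    rw [h, e2, Nat.mod_eq_of_lt hr'] at e1
    rw [Nat.mod_eq_of_lt hr] at e1
    omega
  refine ⟨Nat.eq_of_mul_eq_mul_right hn (by omega), Fin.ext h1⟩

lemma enc_dec {a b : ℕ} {r s r' s' : Fin n}
    (h : (a * n + (r:ℕ)) * n + (s:ℕ) = (b * n + (r':ℕ)) * n + (s':ℕ)) :
    a = b ∧ r = r' ∧ s = s' := by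
  obtain ⟨h1, h2⟩ := enc1 h
  obtain ⟨h3, h4⟩ := enc1 h1
  exact ⟨h3, h4, h2⟩

lemma ordM_inj_odd (x y : ZB ℓ × Fin n × Fin n)
    (hx : (zigData F ℓ).pM n x = 2) (hy : (zigData F ℓ).pM n y = 2) (hne : x ≠ y) :
    (zigData F ℓ).ordM n x ≠ (zigData F ℓ).ordM n y := by
  intro h
  have h' : (ordZ x.1 * n + (x.2.1:ℕ)) * n + (x.2.2:ℕ)
      = (ordZ y.1 * n + (y.2.1:ℕ)) * n + (y.2.2:ℕ) := h
  obtain ⟨h1, h2, h3⟩ := enc_dec h'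
  rcases eq_or_ne x.1 y.1 with he | hne1
  · apply hne
    obtain ⟨x1, x2, x3⟩ := x
    obtain ⟨y1, y2, y3⟩ := y
    simp only at he h2 h3
    rw [he, h2, h3]
  · exact ordZ_inj_odd x.1 y.1 hx hy hne1 h1

lemma ordM_tau_inj_odd (x y : ZB ℓ × Fin n × Fin n)
    (hx : (zigData F ℓ).pM n x = 2) (hy : (zigData F ℓ).pM n y = 2) (hne : x ≠ y) :
    (zigData F ℓ).ordM n (tauM x) ≠ (zigData F ℓ).ordM n (tauM y) := by
  apply ordM_inj_odd
  · rw [pM_tauM]; exact hx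
  · rw [pM_tauM]; exact hy
  · exact fun hh => hne (tauM_inj hh)

lemma mulM_antihom (x y : ZB ℓ × Fin n × Fin n) :
    (zigData F ℓ).mulM n (tauM y) (tauM x)
      = Finsupp.mapDomain tauM ((zigData F ℓ).mulM n x y) := by
  obtain ⟨a, r, s⟩ := x
  obtain ⟨b, u, v⟩ := y
  show (if u = s then Finsupp.mapDomain (fun c => (c, v, r)) (mulZ F (tauZ b) (tauZ a)) else 0)
    = Finsupp.mapDomain tauM (if s = u then Finsupp.mapDomain (fun c => (c, r, v)) (mulZ F a b) else 0)
  by_cases h : s = u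
  · rw [if_pos h.symm, if_pos h, mulZ_antihom, ← Finsupp.mapDomain_comp,
      ← Finsupp.mapDomain_comp]
    rfl
  · rw [if_neg (fun hh => h hh.symm), if_neg h, Finsupp.mapDomain_zero]

lemma mulM_struct (x y : ZB ℓ × Fin n × Fin n) :
    (zigData F ℓ).mulM n x y = 0 ∨ ∃ z, (zigData F ℓ).mulM n x y = Finsupp.single z (1:F) ∧
      par2 ((zigData F ℓ).pM n z) = par2 ((zigData F ℓ).pM n x) + par2 ((zigData F ℓ).pM n y) := by
  obtain ⟨a, r, s⟩ := x
  obtain ⟨b, u, v⟩ := y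
  have hm : (zigData F ℓ).mulM n (a, r, s) (b, u, v)
      = (if s = u then Finsupp.mapDomain (fun c => (c, r, v)) (mulZ F a b) else 0) := rfl
  erw [hm]
  by_cases h : s = u
  · rcases mulZ_struct (F := F) a b with h0 | ⟨z, hz, hpar⟩
    · left
      rw [if_pos h, h0, Finsupp.mapDomain_zero]
      rfl
    · right
      refine ⟨(z, r, v), ?_, hpar⟩
      rw [if_pos h, hz, Finsupp.mapDomain_single]
      rfl
  · left
    rw [if_neg h]
    rfl

variable (F ℓ n d) in
/-- the transpose involution on the ambient space of `T^Z(n,d)` -/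
def JJ : TPow F ((zigData F ℓ).MBt n) d →ₗ[F] TPow F ((zigData F ℓ).MBt n) d :=
  Jmap F ((zigData F ℓ).pM n) tauM d

lemma JJ_JJ (v : TPow F ((zigData F ℓ).MBt n) d) : JJ F ℓ n d (JJ F ℓ n d v) = v :=
  Jmap_Jmap _ _ pM_tauM tauM_tauM v

lemma JJ_amul (x v : TPow F ((zigData F ℓ).MBt n) d) :
    JJ F ℓ n d ((zigData F ℓ).amul n d x v)
      = (zigData F ℓ).ramul n d (JJ F ℓ n d x) (JJ F ℓ n d v) :=
  J_intertwine ((zigData F ℓ).pM n) tauM pM_tauM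
    (fun a b => (zigData F ℓ).mulM n a b)
    (fun x y => mulM_antihom x y) (fun x y => mulM_struct x y) x v

lemma JJ_ramul (x v : TPow F ((zigData F ℓ).MBt n) d) :
    JJ F ℓ n d ((zigData F ℓ).ramul n d x v)
      = (zigData F ℓ).amul n d (JJ F ℓ n d x) (JJ F ℓ n d v) := by
  conv_lhs => rw [← JJ_JJ x, ← JJ_JJ v]
  rw [← JJ_amul, JJ_JJ]

lemma JJ_alg (x : TPow F ((zigData F ℓ).MBt n) d) (hx : x ∈ (zigData F ℓ).alg n d) :
    JJ F ℓ n d x ∈ (zigData F ℓ).alg n d :=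
  J_gammaTilde ((zigData F ℓ).pM n) ((zigData F ℓ).ordM n) tauM pM_tauM tauM_tauM
    ordM_inj_odd ordM_tau_inj_odd x hx

lemma JJ_eta [NeZero n] (μ : MultiComp ℓ n) :
    JJ F ℓ n d ((zigData F ℓ).eta n d μ) = (zigData F ℓ).eta n d μ := by
  unfold SchurAlgData.eta
  set b : Fin d → (zigData F ℓ).MBt n :=
    fun k => ((zigData F ℓ).eA (etaTuple μ d k).1, (etaTuple μ d k).2, (etaTuple μ d k).2)
    with hbdef
  have hb : (stdFam F ((zigData F ℓ).pM n) ((zigData F ℓ).ordM n)).IsSeq b := by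
    intro i j _ _
    show pZ (eZ (etaTuple μ d i).1) ≠ 2
    simp [eZ]
  have := J_y ((zigData F ℓ).pM n) ((zigData F ℓ).ordM n) tauM pM_tauM tauM_tauM
    ordM_inj_odd ordM_tau_inj_odd b hb
  rw [show JJ F ℓ n d = Jmap F ((zigData F ℓ).pM n) tauM d from rfl, this]
  have hτb : tauM ∘ b = b := by
    funext k
    rfl
  have hp2 : p2c ((zigData F ℓ).pM n) b = 0 := by
    unfold p2c
    rw [Finset.card_eq_zero, Finset.filter_eq_empty_iff]
    rintro q _ ⟨_, hq, _⟩
    revert hq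
    show ¬ pZ (eZ (etaTuple μ d q.1).1) = 2
    simp [eZ]
  erw [hτb]
  rw [hp2, pow_zero, one_smul]

section Stab

variable [NeZero n]

lemma lStable_map (N : Submodule F (TPow F ((zigData F ℓ).MBt n) d))
    (h : (zigData F ℓ).lStable n d N) :
    (zigData F ℓ).rStable n d (Submodule.map (JJ F ℓ n d) N) := by
  intro x hx v hv
  obtain ⟨u, hu, rfl⟩ := hv
  have : (zigData F ℓ).ramul n d x (JJ F ℓ n d u)
      = JJ F ℓ n d ((zigData F ℓ).amul n d (JJ F ℓ n d x) u) := by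
    rw [JJ_amul, JJ_JJ]
  rw [this]
  exact Submodule.mem_map_of_mem (h _ (JJ_alg _ hx) _ hu)

lemma rStable_map (N : Submodule F (TPow F ((zigData F ℓ).MBt n) d))
    (h : (zigData F ℓ).rStable n d N) :
    (zigData F ℓ).lStable n d (Submodule.map (JJ F ℓ n d) N) := by
  intro x hx v hv
  obtain ⟨u, hu, rfl⟩ := hv
  have : (zigData F ℓ).amul n d x (JJ F ℓ n d u)
      = JJ F ℓ n d ((zigData F ℓ).ramul n d (JJ F ℓ n d x) u) := by
    rw [JJ_ramul, JJ_JJ]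
  rw [this]
  exact Submodule.mem_map_of_mem (h _ (JJ_alg _ hx) _ hu)

lemma map_D1 (lam : MultiComp ℓ n) :
    Submodule.map (JJ F ℓ n d) ((zigData F ℓ).D1 n d lam) = (zigData F ℓ).R1 n d lam := by
  unfold SchurAlgData.D1 SchurAlgData.lIdeal SchurAlgData.R1 SchurAlgData.rIdeal
  rw [map_inv_sInf _ JJ_JJ]
  congr 1
  ext N
  simp only [Set.mem_image, Set.mem_setOf_eq, Set.singleton_subset_iff, SetLike.mem_coe]
  constructor
  · rintro ⟨N0, ⟨hsub, hstab⟩, rfl⟩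
    exact ⟨⟨(zigData F ℓ).eta n d lam, hsub, JJ_eta lam⟩, lStable_map N0 hstab⟩
  · rintro ⟨hsub, hstab⟩
    refine ⟨Submodule.map (JJ F ℓ n d) N,
      ⟨⟨(zigData F ℓ).eta n d lam, hsub, JJ_eta lam⟩, rStable_map N hstab⟩, ?_⟩
    exact map_inv_inv _ JJ_JJ N

lemma map_hi (lam : MultiComp ℓ n) :
    Submodule.map (JJ F ℓ n d) ((zigData F ℓ).idealHi n d lam)
      = (zigData F ℓ).idealHi n d lam := by
  have hfix : ∀ w ∈ (zigData F ℓ).hiSet n d lam, JJ F ℓ n d w = w := by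
    rintro w ⟨μ', _, _, _, _, rfl⟩
    exact JJ_eta μ'
  unfold SchurAlgData.idealHi SchurAlgData.tIdeal
  rw [map_inv_sInf _ JJ_JJ]
  congr 1
  ext N
  simp only [Set.mem_image, Set.mem_setOf_eq]
  constructor
  · rintro ⟨N0, ⟨hsub, hl, hr⟩, rfl⟩
    refine ⟨?_, rStable_map N0 hr, lStable_map N0 hl⟩
    intro w hw
    exact ⟨w, hsub hw, hfix w hw⟩
  · rintro ⟨hsub, hl, hr⟩
    refine ⟨Submodule.map (JJ F ℓ n d) N, ⟨?_, rStable_map N hr, lStable_map N hl⟩, ?_⟩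
    · intro w hw
      exact ⟨w, hsub hw, hfix w hw⟩
    · exact map_inv_inv _ JJ_JJ N

lemma map_D2 (lam : MultiComp ℓ n) :
    Submodule.map (JJ F ℓ n d) ((zigData F ℓ).D2 n d lam) = (zigData F ℓ).R2 n d lam := by
  unfold SchurAlgData.D2 SchurAlgData.R2
  rw [map_inv_inf _ JJ_JJ, map_D1, map_hi]

lemma map_main (lam μ : MultiComp ℓ n) :
    Submodule.map (JJ F ℓ n d)
        (Submodule.map ((zigData F ℓ).amul n d ((zigData F ℓ).eta n d μ))
          ((zigData F ℓ).D1 n d lam) ⊔ (zigData F ℓ).D2 n d lam)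
      = Submodule.map ((zigData F ℓ).ramul n d ((zigData F ℓ).eta n d μ))
          ((zigData F ℓ).R1 n d lam) ⊔ (zigData F ℓ).R2 n d lam := by
  rw [Submodule.map_sup, map_D2, ← Submodule.map_comp]
  have hcomp : (JJ F ℓ n d) ∘ₗ ((zigData F ℓ).amul n d ((zigData F ℓ).eta n d μ))
      = ((zigData F ℓ).ramul n d ((zigData F ℓ).eta n d μ)) ∘ₗ (JJ F ℓ n d) := by
    apply LinearMap.ext
    intro v
    show JJ F ℓ n d ((zigData F ℓ).amul n d ((zigData F ℓ).eta n d μ) v) = _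
    rw [JJ_amul, JJ_eta]
    rfl
  rw [hcomp, Submodule.map_comp, map_D1]

end Stab

variable (F ℓ n d) in
def JE : TPow F ((zigData F ℓ).MBt n) d ≃ₗ[F] TPow F ((zigData F ℓ).MBt n) d :=
  LinearEquiv.ofLinear (JJ F ℓ n d) (JJ F ℓ n d)
    (LinearMap.ext JJ_JJ) (LinearMap.ext JJ_JJ)

lemma finrank_map_JJ (N : Submodule F (TPow F ((zigData F ℓ).MBt n) d)) :
    Module.finrank F (Submodule.map (JJ F ℓ n d) N) = Module.finrank F N := by
  have : Submodule.map (JJ F ℓ n d) N = Submodule.map ((JE F ℓ n d) : _ →ₗ[F] _) N := rfl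
  rw [this]
  exact LinearEquiv.finrank_map_eq (JE F ℓ n d) N

end S5fin






/-!
STATEMENT 5: Let `F` be a field which is a module over a characteristic-0 PID `R`,
and `d ≤ n`. For all `λ ∈ Λ^I_+(n,d)` the standard and costandard `T^Z(n,d)`-modules
have equal formal characters: `dim η_μ Δ(λ) = dim η_μ ∇(λ)` for every `μ ∈ Λ^I(n,d)`.

Encoding: `Δ(λ)` is the subquotient `D1 λ / D2 λ` of the left regular module, so
`dim η_μ Δ(λ) = dim (η_μ · D1 λ ⊔ D2 λ) - dim D2 λ`.  The costandard module
`∇(λ)` is the linear dual of the right standard module `Δ^op(λ) = R1 λ / R2 λ`, and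
`η_μ ∇(λ)` is dual to the image of right multiplication by `η_μ` on `Δ^op(λ)`, so
`dim η_μ ∇(λ) = dim (R1 λ · η_μ ⊔ R2 λ) - dim R2 λ`.  The equality of the two
dimensions is stated additively to avoid natural subtraction.
-/
theorem statement5
    (R : Type) [CommRing R] [IsDomain R] [IsPrincipalIdealRing R] [CharZero R]
    (F : Type) [Field F] [Algebra R F]
    (ℓ n d : ℕ) [NeZero n] (hℓ : 1 ≤ ℓ) (hdn : d ≤ n)
    (lam : MultiComp ℓ n) (hlamP : IsMultiPartition lam) (hlamd : mcSize lam = d)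
    (μ : MultiComp ℓ n) (hμ : mcSize μ = d) :
    letI S := zigData F ℓ
    Module.finrank F
        ↥(Submodule.map (S.amul n d (S.eta n d μ)) (S.D1 n d lam) ⊔ S.D2 n d lam) +
      Module.finrank F ↥(S.R2 n d lam) =
    Module.finrank F
        ↥(Submodule.map (S.ramul n d (S.eta n d μ)) (S.R1 n d lam) ⊔ S.R2 n d lam) +
      Module.finrank F ↥(S.D2 n d lam) := by
  have h1 := map_main (F := F) (ℓ := ℓ) (n := n) (d := d) lam μ
  have h2 := map_D2 (F := F) (ℓ := ℓ) (n := n) (d := d) lam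
  have e1 := finrank_map_JJ (F := F) (ℓ := ℓ) (n := n) (d := d)
      (Submodule.map ((zigData F ℓ).amul n d ((zigData F ℓ).eta n d μ))
        ((zigData F ℓ).D1 n d lam) ⊔ (zigData F ℓ).D2 n d lam)
  rw [h1] at e1
  have e2 := finrank_map_JJ (F := F) (ℓ := ℓ) (n := n) (d := d) ((zigData F ℓ).D2 n d lam)
  rw [h2] at e2
  omega

end Paper
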